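/- arXiv:2101.04551 — 3 statements merged into one kernel-verified Lean document; each statement's English description precedes it below -/
import Mathlib

section
/- Let n∈ℕ, let w be any one of the four Chebyshev weights, let t_k^n (k=1,…,n) be the corresponding angular nodes, and set Δt_k^n = t_k^n − t_{k−1}^n with t_0^n=0, and n_w=n for w=w1, n_w=n+1 for w=w2, n_w=(2n+1)/2 for w=w3 and w=w4. Then for every ν∈ℕ and every trigonometric polynomial Q of degree at most ν that is either an even function or an odd function: Σ_{k=1}^n |Q(t_k^n)|·Δt_k^n ≤ (1 + 2πν/n_w)·∫_0^π |Q(τ)| dτ. -/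
open Real Set Finset Polynomial

noncomputable section

/-- The four kinds of Chebyshev weights. -/
inductive ChebKind | one | two | three | four

/-- The Chebyshev weight function of each kind. -/
noncomputable def wFn : ChebKind → ℝ → ℝ
  | .one,   x => 1 / Real.sqrt (1 - x ^ 2)
  | .two,   x => Real.sqrt (1 - x ^ 2)
  | .three, x => Real.sqrt ((1 + x) / (1 - x))
  | .four,  x => Real.sqrt ((1 - x) / (1 + x))

/-- The orthonormal polynomials associated with each Chebyshev weight
(`p_j(w,·)`), expressed via Mathlib's Chebyshev polynomials of the first and
second kind.  On `[-1,1]` these coincide with the usual trigonometric forms. -/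
noncomputable def pPoly : ChebKind → ℕ → Polynomial ℝ
  | .one, 0       => Polynomial.C (1 / Real.sqrt π)
  | .one, (j + 1) => Polynomial.C (Real.sqrt (2 / π)) * Polynomial.Chebyshev.T ℝ ((j : ℤ) + 1)
  | .two, j       => Polynomial.C (Real.sqrt (2 / π)) * Polynomial.Chebyshev.U ℝ (j : ℤ)
  | .three, j     => Polynomial.C (1 / Real.sqrt π) *
      (Polynomial.Chebyshev.U ℝ (j : ℤ) - Polynomial.Chebyshev.U ℝ ((j : ℤ) - 1))
  | .four, j      => Polynomial.C (1 / Real.sqrt π) *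
      (Polynomial.Chebyshev.U ℝ (j : ℤ) + Polynomial.Chebyshev.U ℝ ((j : ℤ) - 1))

noncomputable def pEval (w : ChebKind) (j : ℕ) (x : ℝ) : ℝ := (pPoly w j).eval x

/-- Angular Chebyshev nodes `t_k^n`. -/
noncomputable def tNode : ChebKind → ℕ → ℕ → ℝ
  | .one,   n, k => (2 * (k : ℝ) - 1) * π / (2 * n)
  | .two,   n, k => (k : ℝ) * π / (n + 1)
  | .three, n, k => (2 * (k : ℝ) - 1) * π / (2 * n + 1)
  | .four,  n, k => 2 * (k : ℝ) * π / (2 * n + 1)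

/-- Chebyshev nodes `x_k^n = cos t_k^n`, zeros of `p_n(w,·)`. -/
noncomputable def xNode (w : ChebKind) (n k : ℕ) : ℝ := Real.cos (tNode w n k)

/-- Christoffel numbers `λ_k^n`. -/
noncomputable def lam : ChebKind → ℕ → ℕ → ℝ
  | .one,   n, _ => π / n
  | .two,   n, k => π / (n + 1) * Real.sin (tNode .two n k) ^ 2
  | .three, n, k => 4 * π / (2 * n + 1) * Real.cos (tNode .three n k / 2) ^ 2
  | .four,  n, k => 4 * π / (2 * n + 1) * Real.sin (tNode .four n k / 2) ^ 2

/-- de la Vallée Poussin filter coefficients `μ_{n,j}^m`. -/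
noncomputable def mufilt (n m j : ℕ) : ℝ :=
  if j ≤ n - m then 1 else ((n : ℝ) + m - j) / (2 * m)

/-- Fundamental VP polynomials `Φ_{n,k}^m(w;x)`. -/
noncomputable def Phi (w : ChebKind) (n m k : ℕ) (x : ℝ) : ℝ :=
  lam w n k * ∑ j ∈ Finset.range (n + m), mufilt n m j * pEval w j (xNode w n k) * pEval w j x

/-- The VP interpolation polynomial `V_n^m f`. -/
noncomputable def VP (w : ChebKind) (n m : ℕ) (f : ℝ → ℝ) (x : ℝ) : ℝ :=
  ∑ k ∈ Finset.Icc 1 n, f (xNode w n k) * Phi w n m k x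

/-- Jacobi weight `u(x) = (1-x)^γ (1+x)^δ`. -/
noncomputable def jac (γ δ : ℝ) (x : ℝ) : ℝ := (1 - x) ^ γ * (1 + x) ^ δ

/-- Weighted uniform norm `‖f·u‖ = max_{|x|≤1} |f(x) u(x)|`. -/
noncomputable def wnorm (γ δ : ℝ) (f : ℝ → ℝ) : ℝ :=
  sSup ((fun x => |f x * jac γ δ x|) '' Set.Icc (-1 : ℝ) 1)

/-- Error of best weighted polynomial approximation `E_n(f)_u`. -/
noncomputable def bestE (γ δ : ℝ) (n : ℕ) (f : ℝ → ℝ) : ℝ :=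
  sInf ((fun P : Polynomial ℝ => wnorm γ δ (fun x => f x - P.eval x)) ''
    {P : Polynomial ℝ | P.natDegree ≤ n})

/-- Membership in the space `C^0_u`: `f` is continuous on compact subsets of
`(-1,1)`, `f·u` extends continuously to `[-1,1]`, with value (= limit) `0` at
`±1` when the corresponding exponent is positive. -/
def MemC0 (γ δ : ℝ) (f : ℝ → ℝ) : Prop :=
  ContinuousOn f (Set.Ioo (-1 : ℝ) 1) ∧
  ContinuousOn (fun x => f x * jac γ δ x) (Set.Icc (-1 : ℝ) 1) ∧
  (0 < γ → f 1 * jac γ δ 1 = 0) ∧ (0 < δ → f (-1) * jac γ δ (-1) = 0)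

/-- Conditions (hp-u) on the exponents of `u=(1-x)^γ(1+x)^δ` relative to `w`. -/
def hpu : ChebKind → ℝ → ℝ → Prop
  | .one,   γ, δ => 0 ≤ γ ∧ γ ≤ 1 ∧ 0 ≤ δ ∧ δ ≤ 1
  | .two,   γ, δ => 0 < γ ∧ γ ≤ 3 / 2 ∧ 0 < δ ∧ δ ≤ 3 / 2 ∧ -1 ≤ γ - δ ∧ γ - δ ≤ 1
  | .three, γ, δ => 0 ≤ γ ∧ γ ≤ 1 ∧ 0 < δ ∧ δ ≤ 3 / 2 ∧ γ - δ ≤ 1 / 2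
  | .four,  γ, δ => 0 < γ ∧ γ ≤ 3 / 2 ∧ 0 ≤ δ ∧ δ ≤ 1 ∧ -(1 / 2) ≤ γ - δ

/-- `φ(x) = sqrt(1-x²)`. -/
noncomputable def phi (x : ℝ) : ℝ := Real.sqrt (1 - x ^ 2)

/-- The set of values `|f^{(r)}(x)| φ(x)^r u(x)`, `x ∈ (-1,1)`. -/
noncomputable def derSet (γ δ : ℝ) (r : ℕ) (f : ℝ → ℝ) : Set ℝ :=
  (fun x : ℝ => |iteratedDerivWithin r f (Set.Ioo (-1 : ℝ) 1) x| * phi x ^ r * jac γ δ x) ''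
    Set.Ioo (-1 : ℝ) 1

/-- Membership in the Sobolev-type space `W_r(u)`. -/
def MemW (γ δ : ℝ) (r : ℕ) (f : ℝ → ℝ) : Prop :=
  MemC0 γ δ f ∧ ContDiffOn ℝ r f (Set.Ioo (-1 : ℝ) 1) ∧ BddAbove (derSet γ δ r f)

/-- The norm of `W_r(u)`: `‖fu‖ + ‖f^{(r)} φ^r u‖`. -/
noncomputable def Wnorm (γ δ : ℝ) (r : ℕ) (f : ℝ → ℝ) : ℝ :=
  wnorm γ δ f + sSup (derSet γ δ r f)

/-- The set of values `(n+1)^r E_n(f)_u`, `n ≥ 1`. -/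
noncomputable def zSet (γ δ r : ℝ) (f : ℝ → ℝ) : Set ℝ :=
  (fun n : ℕ => ((n : ℝ) + 1) ^ r * bestE γ δ n f) '' {n : ℕ | 1 ≤ n}

/-- Membership in the Hölder–Zygmund space `Z_r(u)`. -/
def MemZ (γ δ r : ℝ) (f : ℝ → ℝ) : Prop := MemC0 γ δ f ∧ BddAbove (zSet γ δ r f)

/-- The norm of `Z_r(u)`: `‖fu‖ + sup_{n≥1} (n+1)^r E_n(f)_u`. -/
noncomputable def Znorm (γ δ r : ℝ) (f : ℝ → ℝ) : ℝ :=
  wnorm γ δ f + sSup (zSet γ δ r f)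

/-- Exponents `(γ,δ)` of the weight `u = sqrt(w·φ)`. -/
def uExp : ChebKind → ℝ × ℝ
  | .one => (0, 0) | .two => (1 / 2, 1 / 2) | .three => (0, 1 / 2) | .four => (1 / 2, 0)

/-- The constant `C_w`. -/
def Cw : ChebKind → ℝ | .one => 2 | _ => 1

/-- The quantity `n_w`. -/
noncomputable def nw : ChebKind → ℕ → ℝ
  | .one, n => n | .two, n => n + 1
  | .three, n => (2 * (n : ℝ) + 1) / 2 | .four, n => (2 * (n : ℝ) + 1) / 2

/-- The quantity `m_w`. -/
noncomputable def mw : ChebKind → ℕ → ℕ → ℝ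
  | .one, n, m => (n : ℝ) + m | .two, n, m => (n : ℝ) + m
  | .three, n, m => 2 * ((n : ℝ) + m) - 1 | .four, n, m => 2 * ((n : ℝ) + m) - 1

/-- The polynomials `q_{n,j}^m(w,·)` (orthogonal VP basis). -/
noncomputable def qq (w : ChebKind) (n m j : ℕ) (x : ℝ) : ℝ :=
  if j ≤ n - m then pEval w j x
  else ((m : ℝ) + n - j) / (2 * m) * pEval w j x
    - ((m : ℝ) + j - n) / (2 * m) * pEval w (2 * n - j) x

end


section Stmt9Aux
open Real Finset intervalIntegral
noncomputable section

lemma intCos (k : ℤ) : ∫ t in (0:ℝ)..2*π, Real.cos (k*t) = if k = 0 then 2*π else 0 := by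
  rcases eq_or_ne k 0 with h | h
  · simp [h]
  · rw [if_neg h, intervalIntegral.integral_comp_mul_left (fun t => Real.cos t)
      (by exact_mod_cast h)]
    simp only [mul_zero, integral_cos, Real.sin_zero, sub_zero, smul_eq_mul]
    have : (k:ℝ) * (2*π) = (2*k : ℤ) * π := by push_cast; ring
    rw [this, Real.sin_int_mul_pi, mul_zero]

lemma intSin (k : ℤ) : ∫ t in (0:ℝ)..2*π, Real.sin (k*t) = 0 := by
  rcases eq_or_ne k 0 with h | h
  · simp [h]
  · rw [intervalIntegral.integral_comp_mul_left (fun t => Real.sin t) (by exact_mod_cast h)]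
    simp only [mul_zero, integral_sin, Real.cos_zero, smul_eq_mul]
    have : (k:ℝ) * (2*π) = 0 + (k : ℤ) * (2*π) := by ring
    rw [this, Real.cos_add_int_mul_two_pi, Real.cos_zero]
    ring

lemma coscos (x y : ℝ) : Real.cos x * Real.cos y = (Real.cos (x-y) + Real.cos (x+y))/2 := by
  rw [Real.cos_sub, Real.cos_add]; ring

lemma sinsin (x y : ℝ) : Real.sin x * Real.sin y = (Real.cos (x-y) - Real.cos (x+y))/2 := by
  rw [Real.cos_sub, Real.cos_add]; ring

lemma sincos (x y : ℝ) : Real.sin x * Real.cos y = (Real.sin (x+y) + Real.sin (x-y))/2 := by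
  rw [Real.sin_sub, Real.sin_add]; ring

lemma intCosCos (p q : ℤ) : ∫ t in (0:ℝ)..2*π, Real.cos (p*t) * Real.cos (q*t)
    = (if p = q then π else 0) + (if p = -q then π else 0) := by
  have h : ∀ t : ℝ, Real.cos (p*t) * Real.cos (q*t)
      = (Real.cos (((p-q : ℤ)) * t) + Real.cos (((p+q : ℤ)) * t))/2 := by
    intro t; rw [coscos]; push_cast; ring_nf
  simp only [h]
  rw [intervalIntegral.integral_div, intervalIntegral.integral_add
    (Continuous.intervalIntegrable (by fun_prop) _ _)
    (Continuous.intervalIntegrable (by fun_prop) _ _),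
    intCos, intCos]
  by_cases h1 : p = q <;> by_cases h2 : p = -q
  · have e1 : p - q = 0 := by omega
    have e2 : p + q = 0 := by omega
    rw [if_pos e1, if_pos e2, if_pos h1, if_pos h2]; ring
  · have e1 : p - q = 0 := by omega
    have e2 : p + q ≠ 0 := by omega
    rw [if_pos e1, if_neg e2, if_pos h1, if_neg h2]; ring
  · have e1 : p - q ≠ 0 := by omega
    have e2 : p + q = 0 := by omega
    rw [if_neg e1, if_pos e2, if_neg h1, if_pos h2]; ring
  · have e1 : p - q ≠ 0 := by omega
    have e2 : p + q ≠ 0 := by omega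
    rw [if_neg e1, if_neg e2, if_neg h1, if_neg h2]; ring

lemma intSinSin (p q : ℤ) : ∫ t in (0:ℝ)..2*π, Real.sin (p*t) * Real.sin (q*t)
    = (if p = q then π else 0) - (if p = -q then π else 0) := by
  have h : ∀ t : ℝ, Real.sin (p*t) * Real.sin (q*t)
      = (Real.cos (((p-q : ℤ)) * t) - Real.cos (((p+q : ℤ)) * t))/2 := by
    intro t; rw [sinsin]; push_cast; ring_nf
  simp only [h]
  rw [intervalIntegral.integral_div, intervalIntegral.integral_sub
    (Continuous.intervalIntegrable (by fun_prop) _ _)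
    (Continuous.intervalIntegrable (by fun_prop) _ _),
    intCos, intCos]
  by_cases h1 : p = q <;> by_cases h2 : p = -q
  · have e1 : p - q = 0 := by omega
    have e2 : p + q = 0 := by omega
    rw [if_pos e1, if_pos e2, if_pos h1, if_pos h2]; ring
  · have e1 : p - q = 0 := by omega
    have e2 : p + q ≠ 0 := by omega
    rw [if_pos e1, if_neg e2, if_pos h1, if_neg h2]; ring
  · have e1 : p - q ≠ 0 := by omega
    have e2 : p + q = 0 := by omega
    rw [if_neg e1, if_pos e2, if_neg h1, if_pos h2]; ring
  · have e1 : p - q ≠ 0 := by omega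
    have e2 : p + q ≠ 0 := by omega
    rw [if_neg e1, if_neg e2, if_neg h1, if_neg h2]; ring

lemma intSinCos (p q : ℤ) : ∫ t in (0:ℝ)..2*π, Real.sin (p*t) * Real.cos (q*t) = 0 := by
  have h : ∀ t : ℝ, Real.sin (p*t) * Real.cos (q*t)
      = (Real.sin (((p+q : ℤ)) * t) + Real.sin (((p-q : ℤ)) * t))/2 := by
    intro t; rw [sincos]; push_cast; ring_nf
  simp only [h]
  rw [intervalIntegral.integral_div, intervalIntegral.integral_add
    (Continuous.intervalIntegrable (by fun_prop) _ _)
    (Continuous.intervalIntegrable (by fun_prop) _ _),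
    intSin, intSin]
  ring

lemma tripleSC (k p q : ℤ) : ∫ t in (0:ℝ)..2*π,
    Real.sin (k*t) * (Real.cos (p*t) * Real.cos (q*t)) = 0 := by
  have h : ∀ t : ℝ, Real.sin (k*t) * (Real.cos (p*t) * Real.cos (q*t))
      = (Real.sin (k*t) * Real.cos ((p-q : ℤ)*t) + Real.sin (k*t) * Real.cos ((p+q : ℤ)*t))/2 := by
    intro t; rw [coscos]; push_cast; ring_nf
  simp only [h]
  rw [intervalIntegral.integral_div, intervalIntegral.integral_add
    (Continuous.intervalIntegrable (by fun_prop) _ _)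
    (Continuous.intervalIntegrable (by fun_prop) _ _), intSinCos, intSinCos]
  ring

lemma tripleSSC (k p q : ℤ) : ∫ t in (0:ℝ)..2*π,
    Real.sin (k*t) * (Real.sin (p*t) * Real.cos (q*t))
    = ((if k - p = q then π else 0) + (if k - p = -q then π else 0)
      - (if k + p = q then π else 0) - (if k + p = -q then π else 0))/2 := by
  have h : ∀ t : ℝ, Real.sin (k*t) * (Real.sin (p*t) * Real.cos (q*t))
      = (Real.cos ((k-p : ℤ)*t) * Real.cos (q*t) - Real.cos ((k+p : ℤ)*t) * Real.cos (q*t))/2 := by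
    intro t
    have h2 := sinsin ((k:ℝ)*t) ((p:ℝ)*t)
    push_cast
    rw [show Real.sin ((k:ℝ)*t) * (Real.sin ((p:ℝ)*t) * Real.cos ((q:ℝ)*t))
      = (Real.sin ((k:ℝ)*t) * Real.sin ((p:ℝ)*t)) * Real.cos ((q:ℝ)*t) from by ring, h2]
    ring_nf
  simp only [h]
  rw [intervalIntegral.integral_div, intervalIntegral.integral_sub
    (Continuous.intervalIntegrable (by fun_prop) _ _)
    (Continuous.intervalIntegrable (by fun_prop) _ _), intCosCos, intCosCos]
  ring

lemma countD (ν : ℕ) (c : ℤ) (hc : 0 ≤ c) (x : ℝ) :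
    ∑ l ∈ Finset.range ν, ∑ m ∈ Finset.range ν, (if (l:ℤ) - m = c then x else 0)
    = ((ν - min ν c.toNat : ℕ) : ℝ) * x := by
  have inner : ∀ l ∈ Finset.range ν,
      (∑ m ∈ Finset.range ν, if (l:ℤ) - m = c then x else 0)
      = if c.toNat ≤ l then x else 0 := by
    intro l hl
    simp only [Finset.mem_range] at hl
    by_cases h : c.toNat ≤ l
    · rw [if_pos h]
      rw [Finset.sum_eq_single_of_mem (l - c.toNat) (Finset.mem_range.2 (by omega))]
      · rw [if_pos (by omega)]
      · intro m _ hm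
        rw [if_neg (by omega)]
    · rw [if_neg h]
      apply Finset.sum_eq_zero
      intro m hm
      rw [if_neg (by omega)]
  rw [Finset.sum_congr rfl inner]
  clear inner
  induction ν with
  | zero => simp
  | succ n ih =>
      rw [Finset.sum_range_succ, ih]
      by_cases h : c.toNat ≤ n
      · rw [if_pos h]
        have h1 : n + 1 - min (n+1) c.toNat = (n - min n c.toNat) + 1 := by omega
        rw [h1]; push_cast; ring
      · rw [if_neg h]
        have h1 : n + 1 - min (n+1) c.toNat = n - min n c.toNat := by omega
        rw [h1]; ring

noncomputable def trigS (ν : ℕ) (a b : ℕ → ℝ) (τ : ℝ) : ℝ :=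
  ∑ j ∈ Finset.range (ν+1), (a j * Real.cos (j*τ) + b j * Real.sin (j*τ))

noncomputable def trigD (ν : ℕ) (a b : ℕ → ℝ) (τ : ℝ) : ℝ :=
  ∑ j ∈ Finset.range (ν+1), (j:ℝ) * (b j * Real.cos (j*τ) - a j * Real.sin (j*τ))

noncomputable def Gk (ν : ℕ) (t : ℝ) : ℝ :=
  (∑ l ∈ Finset.range ν, Real.cos (l*t))^2 + (∑ l ∈ Finset.range ν, Real.sin (l*t))^2

lemma contS (ν : ℕ) (a b : ℕ → ℝ) : Continuous (trigS ν a b) := by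
  unfold trigS; fun_prop

lemma contD (ν : ℕ) (a b : ℕ → ℝ) : Continuous (trigD ν a b) := by
  unfold trigD; fun_prop

lemma contG (ν : ℕ) : Continuous (Gk ν) := by
  unfold Gk; fun_prop

lemma Gnn (ν : ℕ) (t : ℝ) : 0 ≤ Gk ν t := by unfold Gk; positivity

lemma Gexp (ν : ℕ) (t : ℝ) : Gk ν t
    = ∑ l ∈ Finset.range ν, ∑ m ∈ Finset.range ν, Real.cos (((l:ℝ)-(m:ℝ)) * t) := by
  unfold Gk
  rw [sq, sq, Finset.sum_mul_sum, Finset.sum_mul_sum, ← Finset.sum_add_distrib]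
  refine Finset.sum_congr rfl fun l _ => ?_
  rw [← Finset.sum_add_distrib]
  refine Finset.sum_congr rfl fun m _ => ?_
  rw [show (((l:ℝ)-(m:ℝ)) * t) = (l:ℝ)*t - (m:ℝ)*t from by ring, Real.cos_sub]

lemma intCos' (l m : ℕ) : ∫ t in (0:ℝ)..2*π, Real.cos (((l:ℝ)-(m:ℝ)) * t)
    = if ((l:ℤ)-m = 0) then 2*π else 0 := by
  have h := intCos ((l:ℤ)-m); push_cast at h; exact h

lemma tripleSC' (k p l m : ℕ) : ∫ t in (0:ℝ)..2*π,
    Real.sin ((k:ℝ)*t) * (Real.cos ((p:ℝ)*t) * Real.cos (((l:ℝ)-(m:ℝ)) * t)) = 0 := by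
  have h := tripleSC k p ((l:ℤ)-m); push_cast at h; exact h

lemma tripleSSC' (k p l m : ℕ) : ∫ t in (0:ℝ)..2*π,
    Real.sin ((k:ℝ)*t) * (Real.sin ((p:ℝ)*t) * Real.cos (((l:ℝ)-(m:ℝ)) * t))
    = ((if (k:ℤ) - p = (l:ℤ)-m then π else 0) + (if (k:ℤ) - p = -((l:ℤ)-m) then π else 0)
      - (if (k:ℤ) + p = (l:ℤ)-m then π else 0) - (if (k:ℤ) + p = -((l:ℤ)-m) then π else 0))/2 := by
  have h := tripleSSC k p ((l:ℤ)-m); push_cast at h; exact h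

set_option maxHeartbeats 1000000 in
lemma intG (ν : ℕ) : ∫ t in (0:ℝ)..2*π, Gk ν t = 2*π*ν := by
  simp only [Gexp]
  rw [intervalIntegral.integral_finset_sum
    (fun l _ => Continuous.intervalIntegrable (by fun_prop) _ _)]
  have h1 : ∀ l ∈ Finset.range ν,
      (∫ t in (0:ℝ)..2*π, ∑ m ∈ Finset.range ν, Real.cos (((l:ℝ)-(m:ℝ)) * t))
      = 2*π := by
    intro l hl
    rw [intervalIntegral.integral_finset_sum
      (fun m _ => Continuous.intervalIntegrable (by fun_prop) _ _)]
    rw [Finset.sum_congr rfl (fun m _ => intCos' l m), Finset.sum_eq_single_of_mem l hl]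
    · rw [if_pos (by omega)]
    · intro m _ hm; rw [if_neg (by omega)]
  rw [Finset.sum_congr rfl h1, Finset.sum_const, Finset.card_range, nsmul_eq_mul]
  ring

set_option maxHeartbeats 1000000 in
lemma I1 (ν j : ℕ) : ∫ t in (0:ℝ)..2*π,
    Real.cos ((j:ℝ)*t) * (Real.sin ((ν:ℝ)*t) * Gk ν t) = 0 := by
  have h : ∀ t : ℝ, Real.cos ((j:ℝ)*t) * (Real.sin ((ν:ℝ)*t) * Gk ν t)
      = ∑ l ∈ Finset.range ν, ∑ m ∈ Finset.range ν,
        Real.sin ((ν:ℝ)*t) * (Real.cos ((j:ℝ)*t) * Real.cos (((l:ℝ)-(m:ℝ)) * t)) := by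
    intro t
    rw [Gexp, Finset.mul_sum, Finset.mul_sum]
    refine Finset.sum_congr rfl fun l _ => ?_
    rw [Finset.mul_sum, Finset.mul_sum]
    exact Finset.sum_congr rfl fun m _ => by ring
  simp only [h]
  rw [intervalIntegral.integral_finset_sum
    (fun l _ => Continuous.intervalIntegrable (by fun_prop) _ _)]
  apply Finset.sum_eq_zero
  intro l _
  rw [intervalIntegral.integral_finset_sum
    (fun m _ => Continuous.intervalIntegrable (by fun_prop) _ _)]
  exact Finset.sum_eq_zero fun m _ => tripleSC' ν j l m

set_option maxHeartbeats 1000000 in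
lemma I2 (ν j : ℕ) (hj : j ≤ ν) : ∫ t in (0:ℝ)..2*π,
    Real.sin ((j:ℝ)*t) * (Real.sin ((ν:ℝ)*t) * Gk ν t) = π * j := by
  have h : ∀ t : ℝ, Real.sin ((j:ℝ)*t) * (Real.sin ((ν:ℝ)*t) * Gk ν t)
      = ∑ l ∈ Finset.range ν, ∑ m ∈ Finset.range ν,
        Real.sin ((j:ℝ)*t) * (Real.sin ((ν:ℝ)*t) * Real.cos (((l:ℝ)-(m:ℝ)) * t)) := by
    intro t
    rw [Gexp, Finset.mul_sum, Finset.mul_sum]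
    refine Finset.sum_congr rfl fun l _ => ?_
    rw [Finset.mul_sum, Finset.mul_sum]
  simp only [h]
  rw [intervalIntegral.integral_finset_sum
    (fun l _ => Continuous.intervalIntegrable (by fun_prop) _ _)]
  rw [Finset.sum_congr rfl (fun l (_ : l ∈ Finset.range ν) =>
    (intervalIntegral.integral_finset_sum
      (fun m _ => Continuous.intervalIntegrable (by fun_prop) _ _)))]
  rw [Finset.sum_congr rfl (fun l (_ : l ∈ Finset.range ν) =>
    Finset.sum_congr rfl (fun m _ => tripleSSC' j ν l m))]
  have e1 : ∀ l m : ℕ, ((j:ℤ) - ν = (l:ℤ)-m) ↔ ((m:ℤ) - l = ((ν - j : ℕ):ℤ)) := by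
    intro l m; omega
  have e2 : ∀ l m : ℕ, ((j:ℤ) - ν = -((l:ℤ)-m)) ↔ ((l:ℤ) - m = ((ν - j : ℕ):ℤ)) := by
    intro l m; omega
  have e3 : ∀ l m : ℕ, ((j:ℤ) + ν = (l:ℤ)-m) ↔ ((l:ℤ) - m = ((j + ν : ℕ):ℤ)) := by
    intro l m; omega
  have e4 : ∀ l m : ℕ, ((j:ℤ) + ν = -((l:ℤ)-m)) ↔ ((m:ℤ) - l = ((j + ν : ℕ):ℤ)) := by
    intro l m; omega
  have S1 : ∑ l ∈ Finset.range ν, ∑ m ∈ Finset.range ν,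
      (if (j:ℤ) - ν = (l:ℤ)-m then π else 0) = (j:ℝ) * π := by
    rw [Finset.sum_comm]
    rw [Finset.sum_congr rfl (fun m (_ : m ∈ Finset.range ν) => Finset.sum_congr rfl
      (fun l _ => if_congr (e1 l m) rfl rfl))]
    rw [countD ν _ (Int.natCast_nonneg _)]
    congr 1
    rw [Int.toNat_natCast]
    have : ν - min ν (ν - j) = j := by omega
    rw [this]
  have S2 : ∑ l ∈ Finset.range ν, ∑ m ∈ Finset.range ν,
      (if (j:ℤ) - ν = -((l:ℤ)-m) then π else 0) = (j:ℝ) * π := by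
    rw [Finset.sum_congr rfl (fun l (_ : l ∈ Finset.range ν) => Finset.sum_congr rfl
      (fun m _ => if_congr (e2 l m) rfl rfl))]
    rw [countD ν _ (Int.natCast_nonneg _)]
    congr 1
    rw [Int.toNat_natCast]
    have : ν - min ν (ν - j) = j := by omega
    rw [this]
  have S3 : ∑ l ∈ Finset.range ν, ∑ m ∈ Finset.range ν,
      (if (j:ℤ) + ν = (l:ℤ)-m then π else 0) = 0 := by
    rw [Finset.sum_congr rfl (fun l (_ : l ∈ Finset.range ν) => Finset.sum_congr rfl
      (fun m _ => if_congr (e3 l m) rfl rfl))]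
    rw [countD ν _ (Int.natCast_nonneg _)]
    rw [Int.toNat_natCast]
    have : ν - min ν (j + ν) = 0 := by omega
    rw [this]
    simp
  have S4 : ∑ l ∈ Finset.range ν, ∑ m ∈ Finset.range ν,
      (if (j:ℤ) + ν = -((l:ℤ)-m) then π else 0) = 0 := by
    rw [Finset.sum_comm]
    rw [Finset.sum_congr rfl (fun m (_ : m ∈ Finset.range ν) => Finset.sum_congr rfl
      (fun l _ => if_congr (e4 l m) rfl rfl))]
    rw [countD ν (((j + ν : ℕ):ℤ)) (Int.natCast_nonneg _)]
    rw [Int.toNat_natCast]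
    have : ν - min ν (j + ν) = 0 := by omega
    rw [this]
    simp
  simp only [← Finset.sum_div, Finset.sum_sub_distrib, Finset.sum_add_distrib]
  rw [S1, S2, S3, S4]
  ring

lemma hasDerivS (ν : ℕ) (a b : ℕ → ℝ) (τ : ℝ) :
    HasDerivAt (trigS ν a b) (trigD ν a b τ) τ := by
  unfold trigS trigD
  apply HasDerivAt.fun_sum
  intro j _
  have h1 : HasDerivAt (fun τ:ℝ => (j:ℝ)*τ) (j:ℝ) τ := by
    simpa using (hasDerivAt_id τ).const_mul (j:ℝ)
  have hc := h1.cos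
  have hs := h1.sin
  convert (hc.const_mul (a j)).fun_add (hs.const_mul (b j)) using 1
  ring

lemma perS (ν : ℕ) (a b : ℕ → ℝ) : Function.Periodic (trigS ν a b) (2*π) := by
  intro τ
  unfold trigS
  refine Finset.sum_congr rfl fun j _ => ?_
  rw [show (j:ℝ)*(τ+2*π) = (j:ℝ)*τ + (j:ℤ)*(2*π) from by push_cast; ring,
    Real.cos_add_int_mul_two_pi, Real.sin_add_int_mul_two_pi]

set_option maxHeartbeats 1000000 in
lemma convId (ν : ℕ) (a b : ℕ → ℝ) (x : ℝ) :
    trigD ν a b x * (2*π)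
    = ∫ t in (0:ℝ)..2*π, trigS ν a b (x - t) * (-2 * Real.sin ((ν:ℝ)*t) * Gk ν t) := by
  have hGc : Continuous (Gk ν) := contG ν
  have hS : ∀ t : ℝ, trigS ν a b (x - t) * (-2 * Real.sin ((ν:ℝ)*t) * Gk ν t)
      = ∑ j ∈ Finset.range (ν+1),
        ((a j * Real.cos ((j:ℝ)*x) + b j * Real.sin ((j:ℝ)*x)) * (-2)
            * (Real.cos ((j:ℝ)*t) * (Real.sin ((ν:ℝ)*t) * Gk ν t))
          + (a j * Real.sin ((j:ℝ)*x) - b j * Real.cos ((j:ℝ)*x)) * (-2)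
            * (Real.sin ((j:ℝ)*t) * (Real.sin ((ν:ℝ)*t) * Gk ν t))) := by
    intro t
    unfold trigS
    rw [Finset.sum_mul]
    refine Finset.sum_congr rfl fun j _ => ?_
    rw [show (j:ℝ)*(x - t) = (j:ℝ)*x - (j:ℝ)*t from by ring, Real.cos_sub, Real.sin_sub]
    ring
  simp only [hS]
  rw [intervalIntegral.integral_finset_sum
    (fun j _ => Continuous.intervalIntegrable (by fun_prop) _ _)]
  rw [Finset.sum_congr rfl (fun j (hj : j ∈ Finset.range (ν+1)) => by
    rw [intervalIntegral.integral_add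
      (Continuous.intervalIntegrable (by fun_prop) _ _)
      (Continuous.intervalIntegrable (by fun_prop) _ _),
      intervalIntegral.integral_const_mul, intervalIntegral.integral_const_mul,
      I1 ν j, I2 ν j (by simpa using Nat.lt_succ_iff.mp (Finset.mem_range.mp hj))])]
  unfold trigD
  rw [Finset.sum_mul]
  refine Finset.sum_congr rfl fun j _ => ?_
  ring

lemma pointbound (ν : ℕ) (a b : ℕ → ℝ) (x : ℝ) :
    |trigD ν a b x| * (2*π)
      ≤ ∫ t in (0:ℝ)..2*π, |trigS ν a b (x - t)| * (2 * Gk ν t) := by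
  have hGc : Continuous (Gk ν) := contG ν
  have hSc : Continuous (trigS ν a b) := contS ν a b
  have h2π : (0:ℝ) ≤ 2*π := by positivity
  have h1 : |trigD ν a b x| * (2*π) = |trigD ν a b x * (2*π)| := by
    rw [abs_mul, abs_of_nonneg h2π]
  rw [h1, convId]
  calc |∫ t in (0:ℝ)..2*π, trigS ν a b (x - t) * (-2 * Real.sin ((ν:ℝ)*t) * Gk ν t)|
      ≤ ∫ t in (0:ℝ)..2*π, |trigS ν a b (x - t) * (-2 * Real.sin ((ν:ℝ)*t) * Gk ν t)| :=
        intervalIntegral.abs_integral_le_integral_abs h2π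
    _ ≤ ∫ t in (0:ℝ)..2*π, |trigS ν a b (x - t)| * (2 * Gk ν t) := by
        apply intervalIntegral.integral_mono_on h2π
          (Continuous.intervalIntegrable (by fun_prop) _ _)
          (Continuous.intervalIntegrable (by fun_prop) _ _)
        intro t _
        rw [abs_mul]
        apply mul_le_mul_of_nonneg_left _ (abs_nonneg _)
        rw [abs_mul, abs_mul, abs_neg, abs_of_nonneg (Gnn ν t), abs_two]
        have h3 : |Real.sin ((ν:ℝ)*t)| ≤ 1 := Real.abs_sin_le_one _
        nlinarith [Gnn ν t, abs_nonneg (Real.sin ((ν:ℝ)*t))]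

lemma shiftInt (ν : ℕ) (a b : ℕ → ℝ) (t : ℝ) :
    ∫ x in (0:ℝ)..2*π, |trigS ν a b (x - t)| = ∫ x in (0:ℝ)..2*π, |trigS ν a b x| := by
  have hper : Function.Periodic (fun x => |trigS ν a b x|) (2*π) :=
    fun x => congrArg abs (perS ν a b x)
  rw [intervalIntegral.integral_comp_sub_right (fun x => |trigS ν a b x|) t]
  have h := hper.intervalIntegral_add_eq (0 - t) 0
  rw [show (2*π - t) = 0 - t + 2*π from by ring]
  rw [h]
  norm_num

set_option maxHeartbeats 1000000 in
lemma bern (ν : ℕ) (a b : ℕ → ℝ) :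
    ∫ x in (0:ℝ)..2*π, |trigD ν a b x| ≤ 2*ν * ∫ x in (0:ℝ)..2*π, |trigS ν a b x| := by
  have hGc : Continuous (Gk ν) := contG ν
  have hSc : Continuous (trigS ν a b) := contS ν a b
  have hDc : Continuous (trigD ν a b) := contD ν a b
  have h2π : (0:ℝ) ≤ 2*π := by positivity
  set μ : MeasureTheory.Measure ℝ := MeasureTheory.volume.restrict (Set.Ioc (0:ℝ) (2*π)) with hμ
  have hfc : Continuous (fun p : ℝ × ℝ => |trigS ν a b (p.1 - p.2)| * (2 * Gk ν p.2)) := by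
    fun_prop
  have hint : MeasureTheory.Integrable (fun p : ℝ × ℝ => |trigS ν a b (p.1 - p.2)| * (2 * Gk ν p.2))
      (μ.prod μ) := by
    rw [hμ, MeasureTheory.Measure.prod_restrict]
    apply MeasureTheory.IntegrableOn.mono_set
      (hfc.continuousOn.integrableOn_compact (isCompact_Icc.prod isCompact_Icc))
    exact Set.prod_mono Set.Ioc_subset_Icc_self Set.Ioc_subset_Icc_self
  have hH : MeasureTheory.Integrable
      (fun x => ∫ t, |trigS ν a b (x - t)| * (2 * Gk ν t) ∂μ) μ := by
    exact hint.integral_prod_left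
  set C := ∫ x in (0:ℝ)..2*π, |trigS ν a b x| with hC
  -- inner integral in x for fixed t
  have hinner : ∀ t : ℝ, (∫ x, |trigS ν a b (x - t)| * (2 * Gk ν t) ∂μ) = 2 * Gk ν t * C := by
    intro t
    have : (∫ x, |trigS ν a b (x - t)| * (2 * Gk ν t) ∂μ)
        = (∫ x in (0:ℝ)..2*π, |trigS ν a b (x - t)| * (2 * Gk ν t)) := by
      rw [intervalIntegral.integral_of_le h2π]
    rw [this, intervalIntegral.integral_mul_const, shiftInt]
    ring
  -- Fubini
  have hswap := MeasureTheory.integral_integral_swap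
    (f := fun x t => |trigS ν a b (x - t)| * (2 * Gk ν t)) (μ := μ) (ν := μ) hint
  have htot : (∫ x, (∫ t, |trigS ν a b (x - t)| * (2 * Gk ν t) ∂μ) ∂μ) = 4*π*ν*C := by
    rw [hswap]
    have : ∀ t : ℝ, (∫ x, |trigS ν a b (x - t)| * (2 * Gk ν t) ∂μ) = 2 * Gk ν t * C :=
      hinner
    rw [MeasureTheory.integral_congr_ae (Filter.Eventually.of_forall this)]
    have : (∫ t, 2 * Gk ν t * C ∂μ) = ∫ t in (0:ℝ)..2*π, 2 * Gk ν t * C := by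
      rw [intervalIntegral.integral_of_le h2π]
    rw [this]
    have : ∀ t : ℝ, 2 * Gk ν t * C = (2*C) * Gk ν t := fun t => by ring
    simp only [this]
    rw [intervalIntegral.integral_const_mul, intG]
    ring
  -- main estimate
  have hHiv : IntervalIntegrable
      (fun x => ∫ t, |trigS ν a b (x - t)| * (2 * Gk ν t) ∂μ) MeasureTheory.volume 0 (2*π) := by
    rw [intervalIntegrable_iff_integrableOn_Ioc_of_le h2π]
    exact hH
  have step1 : (∫ x in (0:ℝ)..2*π, |trigD ν a b x| * (2*π))
      ≤ ∫ x in (0:ℝ)..2*π, (∫ t, |trigS ν a b (x - t)| * (2 * Gk ν t) ∂μ) := by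
    apply intervalIntegral.integral_mono_on h2π
      (((hDc.abs).mul continuous_const).intervalIntegrable _ _) hHiv
    intro x _
    have h := pointbound ν a b x
    rwa [intervalIntegral.integral_of_le h2π] at h
  have hmain : (∫ x in (0:ℝ)..2*π, |trigD ν a b x|) * (2*π) ≤ 4*π*ν*C := by
    rw [← intervalIntegral.integral_mul_const]
    refine step1.trans ?_
    rw [← htot, intervalIntegral.integral_of_le h2π]
  have hπ : (0:ℝ) < 2*π := by positivity
  have hfin : (∫ x in (0:ℝ)..2*π, |trigD ν a b x|) ≤ 4*π*ν*C / (2*π) :=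
    (le_div_iff₀ hπ).mpr hmain
  refine hfin.trans (le_of_eq ?_)
  rw [div_eq_iff (ne_of_gt hπ)]
  ring

lemma perD (ν : ℕ) (a b : ℕ → ℝ) : Function.Periodic (trigD ν a b) (2*π) := by
  intro τ
  unfold trigD
  refine Finset.sum_congr rfl fun j _ => ?_
  rw [show (j:ℝ)*(τ+2*π) = (j:ℝ)*τ + (j:ℤ)*(2*π) from by push_cast; ring,
    Real.cos_add_int_mul_two_pi, Real.sin_add_int_mul_two_pi]

lemma halfInt (f : ℝ → ℝ) (hc : Continuous f) (hper : Function.Periodic f (2*π))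
    (hev : ∀ τ, f (-τ) = f τ) :
    ∫ x in (0:ℝ)..π, f x = (1/2) * ∫ x in (0:ℝ)..2*π, f x := by
  have h1 : ∫ x in (-π)..π, f x = ∫ x in (0:ℝ)..2*π, f x := by
    have h := hper.intervalIntegral_add_eq (-π) 0
    convert h using 2 <;> ring
  have h2 : ∫ x in (-π)..(0:ℝ), f x = ∫ x in (0:ℝ)..π, f x := by
    have h := intervalIntegral.integral_comp_neg (a := (0:ℝ)) (b := π) (f := f)
    rw [intervalIntegral.integral_congr (g := f) (fun x _ => hev x)] at h
    rw [h]
    norm_num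
  have h3 : (∫ x in (-π)..(0:ℝ), f x) + ∫ x in (0:ℝ)..π, f x = ∫ x in (-π)..π, f x :=
    intervalIntegral.integral_add_adjacent_intervals
      (hc.intervalIntegrable _ _) (hc.intervalIntegrable _ _)
  linarith

lemma keystep (S D : ℝ → ℝ) (hSc : Continuous S) (hDc : Continuous D)
    (hderiv : ∀ τ, HasDerivAt S (D τ) τ) (u v Δ : ℝ) (huv : u ≤ v) (hΔ : v - u ≤ Δ) :
    |S v| * (v - u) ≤ (∫ τ in u..v, |S τ|) + Δ * ∫ τ in u..v, |D τ| := by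
  have hIDnn : (0:ℝ) ≤ ∫ τ in u..v, |D τ| :=
    intervalIntegral.integral_nonneg huv (fun _ _ => abs_nonneg _)
  have key : ∀ τ ∈ Set.Icc u v, |S v| ≤ |S τ| + ∫ s in u..v, |D s| := by
    intro τ hτ
    have hfund : ∫ s in τ..v, D s = S v - S τ :=
      intervalIntegral.integral_eq_sub_of_hasDerivAt (fun s _ => hderiv s)
        (hDc.intervalIntegrable _ _)
    have e1 : |S v| ≤ |S τ| + |S v - S τ| := by
      calc |S v| = |S τ + (S v - S τ)| := by ring_nf
        _ ≤ |S τ| + |S v - S τ| := abs_add_le _ _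
    have e2 : |S v - S τ| ≤ ∫ s in τ..v, |D s| := by
      rw [← hfund]
      exact intervalIntegral.abs_integral_le_integral_abs hτ.2
    have e3 : (∫ s in τ..v, |D s|) ≤ ∫ s in u..v, |D s| :=
      intervalIntegral.integral_mono_interval hτ.1 hτ.2 le_rfl
        (Filter.Eventually.of_forall fun _ => abs_nonneg _)
        ((hDc.abs).intervalIntegrable _ _)
    linarith
  have e4 : |S v| * (v - u) = ∫ τ in u..v, |S v| := by
    rw [intervalIntegral.integral_const, smul_eq_mul]
    ring
  rw [e4]
  have e5 : (∫ τ in u..v, |S v|)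
      ≤ ∫ τ in u..v, (|S τ| + ∫ s in u..v, |D s|) := by
    apply intervalIntegral.integral_mono_on huv
      (intervalIntegrable_const)
      (((hSc.abs).add continuous_const).intervalIntegrable _ _)
      key
  refine e5.trans ?_
  rw [intervalIntegral.integral_add ((hSc.abs).intervalIntegrable _ _) intervalIntegrable_const,
    intervalIntegral.integral_const, smul_eq_mul]
  have : (v - u) * ∫ s in u..v, |D s| ≤ Δ * ∫ s in u..v, |D s| :=
    mul_le_mul_of_nonneg_right hΔ hIDnn
  linarith

lemma nodeFacts (w : ChebKind) (n : ℕ) (hn : 1 ≤ n) :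
    (∀ i, i < n → (if i = 0 then (0:ℝ) else tNode w n i) ≤ tNode w n (i+1)) ∧
    (∀ i, i < n → tNode w n (i+1) - (if i = 0 then (0:ℝ) else tNode w n i) ≤ π / nw w n) ∧
    tNode w n n ≤ π := by
  have hπ := Real.pi_pos
  have hn' : (1:ℝ) ≤ (n:ℝ) := by exact_mod_cast hn
  rcases w
  case one =>
    refine ⟨?_, ?_, ?_⟩
    · intro i hi
      rcases Nat.eq_zero_or_pos i with h0 | h0
      · subst h0
        simp only [if_pos rfl, tNode]
        push_cast
        apply div_nonneg (by nlinarith) (by positivity)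
      · rw [if_neg (by omega)]
        simp only [tNode]
        push_cast
        gcongr <;> push_cast <;> nlinarith
    · intro i hi
      rcases Nat.eq_zero_or_pos i with h0 | h0
      · subst h0
        simp only [if_pos rfl, tNode, nw]
        push_cast
        rw [sub_zero, div_le_div_iff₀ (by positivity) (by positivity)]
        nlinarith
      · rw [if_neg (by omega)]
        simp only [tNode, nw]
        push_cast
        rw [div_sub_div_same, div_le_div_iff₀ (by positivity) (by positivity)]
        nlinarith
    · simp only [tNode]
      rw [div_le_iff₀ (by positivity)]
      nlinarith
  case two =>
    refine ⟨?_, ?_, ?_⟩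
    · intro i hi
      rcases Nat.eq_zero_or_pos i with h0 | h0
      · subst h0
        simp only [if_pos rfl, tNode]
        positivity
      · rw [if_neg (by omega)]
        simp only [tNode]
        push_cast
        gcongr <;> push_cast <;> nlinarith
    · intro i hi
      rcases Nat.eq_zero_or_pos i with h0 | h0
      · subst h0
        simp only [if_pos rfl, tNode, nw]
        push_cast
        rw [sub_zero, div_le_div_iff₀ (by positivity) (by positivity)]
        nlinarith
      · rw [if_neg (by omega)]
        simp only [tNode, nw]
        push_cast
        rw [div_sub_div_same, div_le_div_iff₀ (by positivity) (by positivity)]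
        nlinarith
    · simp only [tNode]
      rw [div_le_iff₀ (by positivity)]
      nlinarith
  case three =>
    refine ⟨?_, ?_, ?_⟩
    · intro i hi
      rcases Nat.eq_zero_or_pos i with h0 | h0
      · subst h0
        simp only [if_pos rfl, tNode]
        push_cast
        apply div_nonneg (by nlinarith) (by positivity)
      · rw [if_neg (by omega)]
        simp only [tNode]
        push_cast
        gcongr <;> push_cast <;> nlinarith
    · intro i hi
      have hq : π / nw ChebKind.three n = 2*π/(2*(n:ℝ)+1) := by
        simp only [nw]
        rw [div_div_eq_mul_div]
        ring_nf
      rw [hq]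
      rcases Nat.eq_zero_or_pos i with h0 | h0
      · subst h0
        simp only [if_pos rfl, tNode]
        push_cast
        rw [sub_zero, div_le_div_iff₀ (by positivity) (by positivity)]
        nlinarith
      · rw [if_neg (by omega)]
        simp only [tNode]
        push_cast
        rw [div_sub_div_same, div_le_div_iff₀ (by positivity) (by positivity)]
        nlinarith
    · simp only [tNode]
      rw [div_le_iff₀ (by positivity)]
      nlinarith
  case four =>
    refine ⟨?_, ?_, ?_⟩
    · intro i hi
      rcases Nat.eq_zero_or_pos i with h0 | h0
      · subst h0
        simp only [if_pos rfl, tNode]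
        positivity
      · rw [if_neg (by omega)]
        simp only [tNode]
        push_cast
        gcongr <;> push_cast <;> nlinarith
    · intro i hi
      have hq : π / nw ChebKind.four n = 2*π/(2*(n:ℝ)+1) := by
        simp only [nw]
        rw [div_div_eq_mul_div]
        ring_nf
      rw [hq]
      rcases Nat.eq_zero_or_pos i with h0 | h0
      · subst h0
        simp only [if_pos rfl, tNode]
        push_cast
        rw [sub_zero, div_le_div_iff₀ (by positivity) (by positivity)]
        nlinarith
      · rw [if_neg (by omega)]
        simp only [tNode]
        push_cast
        rw [div_sub_div_same, div_le_div_iff₀ (by positivity) (by positivity)]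
        nlinarith
    · simp only [tNode]
      rw [div_le_iff₀ (by positivity)]
      nlinarith

end
end Stmt9Aux

/-- Marcinkiewicz-type inequality at the angular Chebyshev nodes for
even or odd trigonometric polynomials of degree at most `ν`. -/
theorem stmt9 (w : ChebKind) (n ν : ℕ) (Q : ℝ → ℝ)
    (hQ : ∃ a b : ℕ → ℝ, ∀ τ : ℝ,
      Q τ = ∑ j ∈ Finset.range (ν + 1), (a j * Real.cos (j * τ) + b j * Real.sin (j * τ)))
    (hpar : (∀ τ : ℝ, Q (-τ) = Q τ) ∨ (∀ τ : ℝ, Q (-τ) = -Q τ)) :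
    ∑ k ∈ Finset.Icc 1 n,
        |Q (tNode w n k)| * (tNode w n k - if k = 1 then 0 else tNode w n (k - 1))
      ≤ (1 + 2 * π * ν / nw w n) * ∫ τ in (0 : ℝ)..π, |Q τ| := by
  obtain ⟨a, b, hab⟩ := hQ
  have hQeq : Q = trigS ν a b := funext fun τ => hab τ
  subst hQeq
  have hSc : Continuous (trigS ν a b) := contS ν a b
  have hDc : Continuous (trigD ν a b) := contD ν a b
  have hipos : (0:ℝ) ≤ ∫ τ in (0:ℝ)..π, |trigS ν a b τ| :=
    intervalIntegral.integral_nonneg Real.pi_pos.le fun _ _ => abs_nonneg _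
  rcases Nat.eq_zero_or_pos n with hn | hn
  · subst hn
    rw [show Finset.Icc 1 0 = (∅ : Finset ℕ) from rfl, Finset.sum_empty]
    apply mul_nonneg _ hipos
    have h2 : 0 ≤ 2*π*(ν:ℝ) / nw w 0 := by
      apply div_nonneg (by positivity)
      rcases w <;> simp [nw] <;> positivity
    linarith
  -- main case
  have hπ := Real.pi_pos
  have hnw : 0 < nw w n := by
    have hn' : (1:ℝ) ≤ (n:ℝ) := by exact_mod_cast hn
    rcases w <;> simp only [nw] <;> positivity
  obtain ⟨hmono0, hgap0, hsn⟩ := nodeFacts w n hn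
  set Δ : ℝ := π / nw w n with hΔdef
  have hΔnn : 0 ≤ Δ := le_of_lt (div_pos hπ hnw)
  set s : ℕ → ℝ := fun k => if k = 0 then 0 else tNode w n k with hsdef
  have hmono : ∀ i, i < n → s i ≤ s (i+1) := by
    intro i hi
    have := hmono0 i hi
    rcases Nat.eq_zero_or_pos i with h0 | h0
    · subst h0; simpa [hsdef] using this
    · simp only [hsdef, if_neg (by omega : ¬ i = 0), if_neg (by omega : ¬ i + 1 = 0)]
      simpa [if_neg (by omega : ¬ i = 0)] using this
  have hgap : ∀ i, i < n → s (i+1) - s i ≤ Δ := by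
    intro i hi
    have := hgap0 i hi
    rcases Nat.eq_zero_or_pos i with h0 | h0
    · subst h0; simpa [hsdef] using this
    · simp only [hsdef, if_neg (by omega : ¬ i = 0), if_neg (by omega : ¬ i + 1 = 0)]
      simpa [if_neg (by omega : ¬ i = 0)] using this
  have hs0 : s 0 = 0 := by simp [hsdef]
  have hsnn : ∀ i, i ≤ n → 0 ≤ s i := by
    intro i
    induction i with
    | zero => intro _; simp [hsdef]
    | succ k ih => intro h; exact le_trans (ih (by omega)) (hmono k (by omega))
  have hsnπ : s n ≤ π := by
    have : s n = tNode w n n := by simp [hsdef, if_neg (by omega : ¬ n = 0)]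
    rw [this]; exact hsn
  -- rewrite the sum
  have hsum : (∑ k ∈ Finset.Icc 1 n, |trigS ν a b (tNode w n k)| *
        (tNode w n k - if k = 1 then 0 else tNode w n (k - 1)))
      = ∑ i ∈ Finset.range n, |trigS ν a b (s (i+1))| * (s (i+1) - s i) := by
    rw [← Finset.Ico_add_one_right_eq_Icc, Finset.sum_Ico_eq_sum_range]
    refine Finset.sum_congr rfl fun i _ => ?_
    have h1 : (1:ℕ) + i = i + 1 := by omega
    rw [h1]
    have h2 : s (i+1) = tNode w n (i+1) := by simp [hsdef, if_neg (by omega : ¬ i + 1 = 0)]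
    rcases Nat.eq_zero_or_pos i with h0 | h0
    · subst h0
      simp [h2, hsdef]
    · rw [if_neg (by omega : ¬ i + 1 = 1), h2]
      have h3 : s i = tNode w n (i + 1 - 1) := by
        simp [hsdef, if_neg (by omega : ¬ i = 0)]
      rw [h3]
  rw [hsum]
  -- per-interval estimate
  have hstep : ∀ i ∈ Finset.range n, |trigS ν a b (s (i+1))| * (s (i+1) - s i)
      ≤ (∫ τ in s i..s (i+1), |trigS ν a b τ|) + Δ * ∫ τ in s i..s (i+1), |trigD ν a b τ| := by
    intro i hi
    exact keystep _ _ hSc hDc (hasDerivS ν a b) _ _ Δ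
      (hmono i (Finset.mem_range.mp hi)) (hgap i (Finset.mem_range.mp hi))
  have hIS : ∀ k, k < n → IntervalIntegrable (fun τ => |trigS ν a b τ|)
      MeasureTheory.volume (s k) (s (k+1)) := fun k _ => (hSc.abs).intervalIntegrable _ _
  have hID : ∀ k, k < n → IntervalIntegrable (fun τ => |trigD ν a b τ|)
      MeasureTheory.volume (s k) (s (k+1)) := fun k _ => (hDc.abs).intervalIntegrable _ _
  have hadjS := intervalIntegral.sum_integral_adjacent_intervals hIS
  have hadjD := intervalIntegral.sum_integral_adjacent_intervals hID
  -- parity facts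
  have haS : ∀ τ, |trigS ν a b (-τ)| = |trigS ν a b τ| := by
    rcases hpar with h | h <;> intro τ
    · rw [h τ]
    · rw [h τ, abs_neg]
  have haD : ∀ τ, |trigD ν a b (-τ)| = |trigD ν a b τ| := by
    rcases hpar with h | h <;> intro τ
    · have h1 := hasDerivS ν a b τ
      have h2 : HasDerivAt (fun x : ℝ => trigS ν a b (-x)) (trigD ν a b (-τ) * (-1)) τ :=
        (hasDerivS ν a b (-τ)).comp τ (hasDerivAt_neg τ)
      rw [show (fun x : ℝ => trigS ν a b (-x)) = trigS ν a b from funext h] at h2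
      have h3 := h1.unique h2
      rw [h3, mul_neg_one, abs_neg]
    · have h1 := hasDerivS ν a b τ
      have h2 : HasDerivAt (fun x : ℝ => trigS ν a b (-x)) (trigD ν a b (-τ) * (-1)) τ :=
        (hasDerivS ν a b (-τ)).comp τ (hasDerivAt_neg τ)
      have h2' : HasDerivAt (fun x : ℝ => -trigS ν a b (-x)) (-(trigD ν a b (-τ) * (-1))) τ :=
        h2.neg
      rw [show (fun x : ℝ => -trigS ν a b (-x)) = trigS ν a b from
        funext fun x => by rw [h x]; ring] at h2'
      have h3 := h1.unique h2'
      rw [h3]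
      rw [show -(trigD ν a b (-τ) * (-1)) = trigD ν a b (-τ) from by ring]
  have hhalfS := halfInt (fun τ => |trigS ν a b τ|) (hSc.abs)
    (fun x => congrArg abs (perS ν a b x)) haS
  have hhalfD := halfInt (fun τ => |trigD ν a b τ|) (hDc.abs)
    (fun x => congrArg abs (perD ν a b x)) haD
  have hDb : (∫ τ in (0:ℝ)..π, |trigD ν a b τ|) ≤ 2*(ν:ℝ) * ∫ τ in (0:ℝ)..π, |trigS ν a b τ| := by
    have hb := bern ν a b
    rw [hhalfD]
    have : 2*(ν:ℝ) * ∫ τ in (0:ℝ)..π, |trigS ν a b τ|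
        = (ν:ℝ) * ∫ τ in (0:ℝ)..2*π, |trigS ν a b τ| := by
      rw [hhalfS]; ring
    rw [this]
    nlinarith [hb]
  calc ∑ i ∈ Finset.range n, |trigS ν a b (s (i+1))| * (s (i+1) - s i)
      ≤ ∑ i ∈ Finset.range n, ((∫ τ in s i..s (i+1), |trigS ν a b τ|)
          + Δ * ∫ τ in s i..s (i+1), |trigD ν a b τ|) := Finset.sum_le_sum hstep
    _ = (∫ τ in (s 0)..(s n), |trigS ν a b τ|) + Δ * ∫ τ in (s 0)..(s n), |trigD ν a b τ| := by
        rw [Finset.sum_add_distrib, ← Finset.mul_sum, hadjS, hadjD]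
    _ ≤ (∫ τ in (0:ℝ)..π, |trigS ν a b τ|) + Δ * ∫ τ in (0:ℝ)..π, |trigD ν a b τ| := by
        rw [hs0]
        have hms : (∫ τ in (0:ℝ)..s n, |trigS ν a b τ|) ≤ ∫ τ in (0:ℝ)..π, |trigS ν a b τ| :=
          intervalIntegral.integral_mono_interval le_rfl (hsnn n le_rfl) hsnπ
            (Filter.Eventually.of_forall fun _ => abs_nonneg _) ((hSc.abs).intervalIntegrable _ _)
        have hmd : (∫ τ in (0:ℝ)..s n, |trigD ν a b τ|) ≤ ∫ τ in (0:ℝ)..π, |trigD ν a b τ| :=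
          intervalIntegral.integral_mono_interval le_rfl (hsnn n le_rfl) hsnπ
            (Filter.Eventually.of_forall fun _ => abs_nonneg _) ((hDc.abs).intervalIntegrable _ _)
        have := mul_le_mul_of_nonneg_left hmd hΔnn
        linarith
    _ ≤ (∫ τ in (0:ℝ)..π, |trigS ν a b τ|)
          + Δ * (2*(ν:ℝ) * ∫ τ in (0:ℝ)..π, |trigS ν a b τ|) := by
        have := mul_le_mul_of_nonneg_left hDb hΔnn
        linarith
    _ = (1 + 2 * π * ν / nw w n) * ∫ τ in (0 : ℝ)..π, |trigS ν a b τ| := by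
        rw [hΔdef]
        field_simp
end

section
/- For all positive integers N and M: ∫_{−π}^{π} |sin(Nτ/2)·sin(Mτ/2)| / sin^2(τ/2) dτ ≤ 2π·sqrt(M·N). -/
open Real Set Finset Polynomial

noncomputable def GG' (n : ℕ) (t : ℝ) : ℝ :=
  (n : ℝ) + 2 * ∑ k ∈ Finset.range n, ((n : ℝ) - (k + 1)) * Real.cos ((k + 1) * t)

lemma dirich' (n : ℕ) (t : ℝ) :
    Real.cos (n * t) - Real.cos (((n : ℝ) + 1) * t)
      = (1 - Real.cos t) * (1 + 2 * ∑ k ∈ Finset.range n, Real.cos (((k : ℝ) + 1) * t)) := by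
  induction n with
  | zero => simp
  | succ n ih =>
    rw [Finset.sum_range_succ]
    have h1 : Real.cos (((n : ℝ) + 1 + 1) * t)
        = Real.cos (((n : ℝ) + 1) * t) * Real.cos t - Real.sin (((n : ℝ) + 1) * t) * Real.sin t := by
      rw [show ((n : ℝ) + 1 + 1) * t = ((n : ℝ) + 1) * t + t by ring, Real.cos_add]
    have h2 : Real.cos ((n : ℝ) * t)
        = Real.cos (((n : ℝ) + 1) * t) * Real.cos t + Real.sin (((n : ℝ) + 1) * t) * Real.sin t := by
      rw [show (n : ℝ) * t = ((n : ℝ) + 1) * t - t by ring, Real.cos_sub]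
    push_cast
    linear_combination ih - h1 - h2

lemma fejer' (n : ℕ) (t : ℝ) :
    1 - Real.cos (n * t) = (1 - Real.cos t) * GG' n t := by
  induction n with
  | zero => simp [GG']
  | succ n ih =>
    have hd := dirich' n t
    have hsplit : ∑ k ∈ Finset.range (n + 1), (((n : ℝ) + 1) - (k + 1)) * Real.cos (((k : ℝ) + 1) * t)
        = (∑ k ∈ Finset.range n, ((n : ℝ) - (k + 1)) * Real.cos (((k : ℝ) + 1) * t))
          + ∑ k ∈ Finset.range n, Real.cos (((k : ℝ) + 1) * t) := by
      rw [Finset.sum_range_succ, ← Finset.sum_add_distrib]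
      rw [show (((n:ℝ)+1) - ((n:ℝ)+1)) * Real.cos (((n:ℝ)+1)*t) = 0 from by ring, add_zero]
      exact Finset.sum_congr rfl fun k _ => by ring
    unfold GG' at ih ⊢
    push_cast
    push_cast at hsplit
    rw [hsplit]
    linear_combination ih + hd

lemma intcos' (k : ℕ) : ∫ τ in (-π)..π, Real.cos (((k : ℝ) + 1) * τ) = 0 := by
  have hk : ((k : ℝ) + 1) ≠ 0 := by positivity
  rw [intervalIntegral.integral_comp_mul_left (fun x => Real.cos x) hk]
  rw [integral_cos]
  have h1 : Real.sin (((k : ℝ) + 1) * π) = 0 := by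
    have := Real.sin_int_mul_pi ((k : ℤ) + 1)
    push_cast at this
    exact this
  have h2 : Real.sin (((k : ℝ) + 1) * -π) = 0 := by
    rw [mul_neg, Real.sin_neg, h1, neg_zero]
  rw [h1, h2]
  simp

lemma GGcont' (n : ℕ) : Continuous (GG' n) := by
  unfold GG'
  continuity

lemma intGG' (n : ℕ) : ∫ τ in (-π)..π, GG' n τ = 2 * π * n := by
  unfold GG'
  have hterm : ∀ k ∈ Finset.range n, IntervalIntegrable
      (fun τ => ((n : ℝ) - (k + 1)) * Real.cos (((k:ℝ) + 1) * τ)) MeasureTheory.volume (-π) π :=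
    fun k _ => (Continuous.intervalIntegrable (by continuity) _ _)
  rw [intervalIntegral.integral_add (intervalIntegrable_const)
      (((Continuous.intervalIntegrable (by continuity) _ _ : IntervalIntegrable _ _ _ _)))]
  rw [intervalIntegral.integral_const_mul, intervalIntegral.integral_finset_sum hterm]
  have : ∀ k ∈ Finset.range n,
      (∫ τ in (-π)..π, ((n : ℝ) - (k + 1)) * Real.cos (((k:ℝ) + 1) * τ)) = 0 := by
    intro k _
    rw [intervalIntegral.integral_const_mul, intcos' k, mul_zero]
  rw [Finset.sum_congr rfl this, Finset.sum_const_zero, mul_zero, add_zero,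
    intervalIntegral.integral_const]
  simp only [smul_eq_mul]
  ring

lemma sinsq' (n : ℕ) (t : ℝ) :
    Real.sin ((n : ℝ) * t / 2) ^ 2 = Real.sin (t / 2) ^ 2 * GG' n t := by
  have h1 := Real.sin_sq_eq_half_sub ((n : ℝ) * t / 2)
  have h2 := Real.sin_sq_eq_half_sub (t / 2)
  rw [show 2 * ((n : ℝ) * t / 2) = (n : ℝ) * t by ring] at h1
  rw [show 2 * (t / 2) = t by ring] at h2
  have h3 := fejer' n t
  linear_combination h1 - GG' n t * h2 + h3 / 2

lemma sin_half_ne' (x : ℝ) (hx : x ∈ Set.Ioc (-π) π) (h0 : x ≠ 0) : Real.sin (x / 2) ≠ 0 := by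
  rcases hx with ⟨h1, h2⟩
  rcases lt_or_gt_of_ne h0 with h | h
  · have : Real.sin (-(x / 2)) > 0 := by
      apply Real.sin_pos_of_pos_of_lt_pi
      · linarith
      · nlinarith [Real.pi_pos]
    rw [Real.sin_neg] at this
    linarith
  · have : Real.sin (x / 2) > 0 := by
      apply Real.sin_pos_of_pos_of_lt_pi
      · linarith
      · nlinarith [Real.pi_pos]
    linarith

lemma ae_ne_zero' : ∀ᵐ (x : ℝ) ∂MeasureTheory.volume, x ≠ 0 := by
  refine MeasureTheory.ae_iff.mpr ?_
  simp

lemma keyInt' (n : ℕ) :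
    ∫ τ in (-π)..π, Real.sin ((n : ℝ) * τ / 2) ^ 2 / Real.sin (τ / 2) ^ 2 = 2 * π * n := by
  rw [← intGG' n]
  apply intervalIntegral.integral_congr_ae
  filter_upwards [ae_ne_zero'] with x hx hmem
  rw [Set.uIoc_of_le (by linarith [Real.pi_pos] : -π ≤ π)] at hmem
  have hs := sin_half_ne' x hmem hx
  rw [sinsq' n x]
  field_simp

lemma sqInt' (n : ℕ) : IntervalIntegrable
    (fun τ => Real.sin ((n : ℝ) * τ / 2) ^ 2 / Real.sin (τ / 2) ^ 2)
    MeasureTheory.volume (-π) π := by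
  have hle : -π ≤ π := by linarith [Real.pi_pos]
  rw [intervalIntegrable_iff_integrableOn_Ioc_of_le hle]
  have hG : MeasureTheory.IntegrableOn (GG' n) (Set.Ioc (-π) π) :=
    (GGcont' n).integrableOn_Ioc
  apply hG.congr
  have h1 : ∀ᵐ (x : ℝ) ∂(MeasureTheory.volume.restrict (Set.Ioc (-π) π)), x ∈ Set.Ioc (-π) π :=
    MeasureTheory.ae_restrict_mem measurableSet_Ioc
  filter_upwards [h1, MeasureTheory.ae_restrict_of_ae ae_ne_zero'] with x hmem hx
  have hs := sin_half_ne' x hmem hx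
  rw [sinsq' n x]
  field_simp

/-- `∫_{−π}^{π} |sin(Nτ/2)sin(Mτ/2)|/sin²(τ/2) dτ ≤ 2π√(MN)`. -/
theorem stmt11 (N M : ℕ) (hN : 0 < N) (hM : 0 < M) :
    ∫ τ in (-π)..π, |Real.sin (N * τ / 2) * Real.sin (M * τ / 2)| / Real.sin (τ / 2) ^ 2
      ≤ 2 * π * Real.sqrt ((M : ℝ) * N) := by
  have hle : -π ≤ π := by linarith [Real.pi_pos]
  have hNpos : (0:ℝ) < N := by exact_mod_cast hN
  have hMpos : (0:ℝ) < M := by exact_mod_cast hM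
  set c : ℝ := Real.sqrt M / Real.sqrt N with hc_def
  set d : ℝ := Real.sqrt N / Real.sqrt M with hd_def
  have hsN : (0:ℝ) < Real.sqrt N := Real.sqrt_pos.mpr hNpos
  have hsM : (0:ℝ) < Real.sqrt M := Real.sqrt_pos.mpr hMpos
  have hc : 0 < c := div_pos hsM hsN
  have hd : 0 < d := div_pos hsN hsM
  have hcd : c * d = 1 := by rw [hc_def, hd_def]; field_simp
  have hpt : ∀ τ : ℝ,
      |Real.sin (N * τ / 2) * Real.sin (M * τ / 2)| / Real.sin (τ / 2) ^ 2
        ≤ c / 2 * (Real.sin ((N : ℝ) * τ / 2) ^ 2 / Real.sin (τ / 2) ^ 2)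
          + d / 2 * (Real.sin ((M : ℝ) * τ / 2) ^ 2 / Real.sin (τ / 2) ^ 2) := by
    intro τ
    set a := Real.sin ((N : ℝ) * τ / 2)
    set b := Real.sin ((M : ℝ) * τ / 2)
    set s := Real.sin (τ / 2)
    rcases eq_or_ne s 0 with hs | hs
    · simp [hs]
    · have hs2 : (0:ℝ) < s ^ 2 := by positivity
      have k1 : 2 * c * (|a| * |b|) ≤ c ^ 2 * a ^ 2 + b ^ 2 := by
        nlinarith [sq_nonneg (c * |a| - |b|), sq_abs a, sq_abs b]
      have h3 := mul_le_mul_of_nonneg_left k1 hd.le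
      have e1 : d * (2 * c * (|a| * |b|)) = 2 * (|a| * |b|) := by
        linear_combination 2 * (|a| * |b|) * hcd
      have e2 : d * (c ^ 2 * a ^ 2 + b ^ 2) = c * a ^ 2 + d * b ^ 2 := by
        linear_combination c * a ^ 2 * hcd
      have k2 : |a| * |b| ≤ c / 2 * a ^ 2 + d / 2 * b ^ 2 := by
        rw [e1, e2] at h3; linarith
      calc |a * b| / s ^ 2 = (|a| * |b|) / s ^ 2 := by rw [abs_mul]
        _ ≤ (c / 2 * a ^ 2 + d / 2 * b ^ 2) / s ^ 2 := by
            exact (div_le_div_iff_of_pos_right hs2).mpr k2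
        _ = c / 2 * (a ^ 2 / s ^ 2) + d / 2 * (b ^ 2 / s ^ 2) := by ring
  have hIF := sqInt' N
  have hIG := sqInt' M
  have hRHS : IntervalIntegrable
      (fun τ => c / 2 * (Real.sin ((N : ℝ) * τ / 2) ^ 2 / Real.sin (τ / 2) ^ 2)
        + d / 2 * (Real.sin ((M : ℝ) * τ / 2) ^ 2 / Real.sin (τ / 2) ^ 2))
      MeasureTheory.volume (-π) π := (hIF.const_mul _).add (hIG.const_mul _)
  have hP : IntervalIntegrable
      (fun τ => |Real.sin (N * τ / 2) * Real.sin (M * τ / 2)| / Real.sin (τ / 2) ^ 2)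
      MeasureTheory.volume (-π) π := by
    rw [intervalIntegrable_iff_integrableOn_Ioc_of_le hle]
    rw [intervalIntegrable_iff_integrableOn_Ioc_of_le hle] at hRHS
    apply hRHS.mono'
    · apply Measurable.aestronglyMeasurable
      apply Measurable.div
      · exact (measurable_abs.comp ((Real.measurable_sin.comp (by fun_prop)).mul
          (Real.measurable_sin.comp (by fun_prop))))
      · exact (Real.measurable_sin.comp (by fun_prop)).pow_const 2
    · apply MeasureTheory.ae_of_all
      intro x
      rw [Real.norm_eq_abs, abs_of_nonneg (by positivity)]
      exact hpt x
  calc ∫ τ in (-π)..π, |Real.sin (N * τ / 2) * Real.sin (M * τ / 2)| / Real.sin (τ / 2) ^ 2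
      ≤ ∫ τ in (-π)..π, (c / 2 * (Real.sin ((N : ℝ) * τ / 2) ^ 2 / Real.sin (τ / 2) ^ 2)
          + d / 2 * (Real.sin ((M : ℝ) * τ / 2) ^ 2 / Real.sin (τ / 2) ^ 2)) := by
        apply intervalIntegral.integral_mono_on hle hP hRHS
        intro x _
        exact hpt x
    _ = c / 2 * (2 * π * N) + d / 2 * (2 * π * M) := by
        rw [intervalIntegral.integral_add (hIF.const_mul _) (hIG.const_mul _),
          intervalIntegral.integral_const_mul, intervalIntegral.integral_const_mul,
          keyInt' N, keyInt' M]
    _ = 2 * π * Real.sqrt ((M : ℝ) * N) := by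
        have h1 : c * N = Real.sqrt ((M : ℝ) * N) := by
          rw [Real.sqrt_mul hMpos.le, hc_def, div_mul_eq_mul_div, mul_div_assoc,
            Real.div_sqrt]
        have h2 : d * M = Real.sqrt ((M : ℝ) * N) := by
          rw [Real.sqrt_mul hMpos.le, hd_def, div_mul_eq_mul_div, mul_div_assoc,
            Real.div_sqrt, mul_comm]
        linear_combination π * h1 + π * h2
end

section
/- Let w be any one of the four Chebyshev weights and 0<m<n integers. Then the fundamental VP polynomials satisfy Φ_{n,k}^m(w; x_j^n) = 1 if j=k and 0 if j≠k, for all j,k∈{1,…,n}. Consequently, for every function f defined at the nodes, V_n^m f(x_j^n) = f(x_j^n) for j=1,…,n, i.e. the VP polynomial interpolates f at the Chebyshev zeros. -/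
open Real Set Finset Polynomial

set_option maxHeartbeats 1000000

lemma two_cos_cos (a b : ℝ) : 2 * (Real.cos a * Real.cos b) = Real.cos (a - b) + Real.cos (a + b) := by
  rw [Real.cos_sub, Real.cos_add]; ring

lemma two_sin_sin (a b : ℝ) : 2 * (Real.sin a * Real.sin b) = Real.cos (a - b) - Real.cos (a + b) := by
  rw [Real.cos_sub, Real.cos_add]; ring

lemma sin_ne' (x : ℝ) (h0 : x ≠ 0) (hl : -π < x) (hr : x < π) : Real.sin x ≠ 0 := by
  rcases lt_or_gt_of_ne h0 with h | h
  · exact ne_of_lt (Real.sin_neg_of_neg_of_neg_pi_lt h hl)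
  · exact ne_of_gt (Real.sin_pos_of_pos_of_lt_pi h hr)

lemma sinx_ne (a b : ℝ) (hb : 0 < b) (ha0 : a ≠ 0) (hab : |a| < b) : Real.sin (a * π / b) ≠ 0 := by
  rw [abs_lt] at hab
  apply sin_ne'
  · exact div_ne_zero (mul_ne_zero ha0 (ne_of_gt Real.pi_pos)) hb.ne'
  · rw [neg_lt, ← neg_div, ← neg_mul]
    rw [div_lt_iff₀ hb]
    nlinarith [Real.pi_pos]
  · rw [div_lt_iff₀ hb]
    nlinarith [Real.pi_pos]

lemma cosD (N : ℕ) (θ : ℝ) :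
    (∑ j ∈ range N, Real.cos (j * θ)) * (2 * Real.sin (θ / 2))
      = Real.sin (N * θ - θ / 2) + Real.sin (θ / 2) := by
  have key : ∀ j : ℕ, Real.cos (j * θ) * (2 * Real.sin (θ / 2))
      = Real.sin (((j+1 : ℕ)) * θ - θ / 2) - Real.sin (j * θ - θ / 2) := by
    intro j
    rw [Real.sin_sub_sin]
    push_cast
    rw [show ((((j:ℝ)+1)*θ - θ/2) - ((j:ℝ)*θ - θ/2))/2 = θ/2 by ring,
        show ((((j:ℝ)+1)*θ - θ/2) + ((j:ℝ)*θ - θ/2))/2 = (j:ℝ)*θ by ring]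
    ring
  rw [Finset.sum_mul, Finset.sum_congr rfl (fun j _ => key j),
      Finset.sum_range_sub (fun j => Real.sin (j * θ - θ / 2)) N]
  push_cast
  rw [show (0:ℝ) * θ - θ/2 = -(θ/2) by ring, Real.sin_neg]
  ring

lemma cosD_eq (N : ℕ) (d : ℤ) (θ : ℝ) (hθ : (N : ℝ) * θ = (d : ℝ) * π)
    (hs : Real.sin (θ / 2) ≠ 0) :
    ∑ j ∈ range N, Real.cos (j * θ) = (1 - (-1 : ℝ) ^ d) / 2 := by
  have h := cosD N θ
  rw [show (N:ℝ)*θ - θ/2 = (d:ℝ)*π - θ/2 by rw [hθ], Real.sin_int_mul_pi_sub] at h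
  have h2 : (∑ j ∈ range N, Real.cos (j * θ)) * (2 * Real.sin (θ / 2))
      = ((1 - (-1 : ℝ) ^ d) / 2) * (2 * Real.sin (θ / 2)) := by rw [h]; ring
  exact mul_right_cancel₀ (mul_ne_zero two_ne_zero hs) h2

lemma cosD_zero (N : ℕ) : ∑ j ∈ range N, Real.cos ((j:ℝ) * 0) = N := by simp

lemma cosD' (N : ℕ) (θ : ℝ) :
    (∑ j ∈ range N, Real.cos ((2 * j + 1) * θ)) * (2 * Real.sin θ)
      = Real.sin (2 * N * θ) := by
  have key : ∀ j : ℕ, Real.cos ((2 * (j:ℝ) + 1) * θ) * (2 * Real.sin θ)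
      = Real.sin (2 * ((j+1 : ℕ):ℝ) * θ) - Real.sin (2 * (j:ℝ) * θ) := by
    intro j
    rw [Real.sin_sub_sin]
    push_cast
    rw [show ((2*((j:ℝ)+1)*θ) - (2*(j:ℝ)*θ))/2 = θ by ring,
        show ((2*((j:ℝ)+1)*θ) + (2*(j:ℝ)*θ))/2 = (2*(j:ℝ)+1)*θ by ring]
    ring
  rw [Finset.sum_mul, Finset.sum_congr rfl (fun j _ => key j),
      Finset.sum_range_sub (fun j => Real.sin (2 * (j:ℝ) * θ)) N]
  push_cast
  rw [show (2:ℝ) * 0 * θ = 0 by ring, Real.sin_zero]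
  ring

lemma cosD'_eq (N : ℕ) (d : ℤ) (θ : ℝ) (hθ : (2 * N + 1 : ℝ) * θ = (d : ℝ) * π)
    (hs : Real.sin θ ≠ 0) :
    ∑ j ∈ range N, Real.cos ((2 * j + 1) * θ) = -(-1 : ℝ) ^ d / 2 := by
  have h := cosD' N θ
  rw [show (2:ℝ) * N * θ = (d:ℝ)*π - θ by nlinarith [hθ], Real.sin_int_mul_pi_sub] at h
  have h2 : (∑ j ∈ range N, Real.cos ((2 * j + 1) * θ)) * (2 * Real.sin θ)
      = (-(-1 : ℝ) ^ d / 2) * (2 * Real.sin θ) := by rw [h]; ring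
  exact mul_right_cancel₀ (mul_ne_zero two_ne_zero hs) h2

lemma cosD'_zero (N : ℕ) : ∑ j ∈ range N, Real.cos ((2 * (j:ℝ) + 1) * 0) = N := by simp

lemma pEval_one_zero (x : ℝ) : pEval .one 0 x = 1 / Real.sqrt π := by
  simp [pEval, pPoly]

lemma pEval_one (J : ℕ) (hJ : 1 ≤ J) (t : ℝ) :
    pEval .one J (Real.cos t) = Real.sqrt (2 / π) * Real.cos (J * t) := by
  obtain ⟨j, rfl⟩ : ∃ j, J = j + 1 := ⟨J - 1, (Nat.succ_pred_eq_of_pos hJ).symm⟩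
  simp [pEval, pPoly]

lemma pEval_two (j : ℕ) (t : ℝ) :
    pEval .two j (Real.cos t) * Real.sin t = Real.sqrt (2 / π) * Real.sin (((j:ℝ) + 1) * t) := by
  simp [pEval, pPoly, mul_assoc, Polynomial.Chebyshev.U_real_cos]

lemma pEval_three_aux (j : ℕ) (t : ℝ) :
    pEval .three j (Real.cos t) * Real.sin t
      = 1 / Real.sqrt π * (Real.sin (((j:ℝ) + 1) * t) - Real.sin ((j:ℝ) * t)) := by
  have h1 := Polynomial.Chebyshev.U_real_cos t (j : ℤ)
  have h2 := Polynomial.Chebyshev.U_real_cos t ((j : ℤ) - 1)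
  simp only [pEval, pPoly, Polynomial.eval_mul, Polynomial.eval_sub, Polynomial.eval_C,
    sub_mul, mul_assoc, h1, h2]
  push_cast
  ring_nf

lemma pEval_four_aux (j : ℕ) (t : ℝ) :
    pEval .four j (Real.cos t) * Real.sin t
      = 1 / Real.sqrt π * (Real.sin (((j:ℝ) + 1) * t) + Real.sin ((j:ℝ) * t)) := by
  have h1 := Polynomial.Chebyshev.U_real_cos t (j : ℤ)
  have h2 := Polynomial.Chebyshev.U_real_cos t ((j : ℤ) - 1)
  simp only [pEval, pPoly, Polynomial.eval_mul, Polynomial.eval_add, Polynomial.eval_C,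
    add_mul, mul_assoc, h1, h2]
  push_cast
  ring_nf

lemma sin_add_sin' (a b : ℝ) :
    Real.sin a + Real.sin b = 2 * Real.sin ((a + b) / 2) * Real.cos ((a - b) / 2) := by
  have h := Real.sin_sub_sin a (-b)
  rw [Real.sin_neg] at h
  rw [show (a - -b)/2 = (a+b)/2 by ring, show (a + -b)/2 = (a-b)/2 by ring] at h
  linarith [h]

lemma sin_half_double (t : ℝ) : Real.sin t = 2 * Real.sin (t/2) * Real.cos (t/2) := by
  rw [show t = 2 * (t/2) by ring, Real.sin_two_mul]
  ring_nf

lemma pEval_three (j : ℕ) (t : ℝ) (hs : Real.sin (t/2) ≠ 0) :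
    pEval .three j (Real.cos t) * Real.cos (t/2)
      = 1 / Real.sqrt π * Real.cos ((2 * (j:ℝ) + 1) * (t/2)) := by
  have h1 := pEval_three_aux j t
  rw [sin_half_double t] at h1
  have h2 : Real.sin (((j:ℝ) + 1) * t) - Real.sin ((j:ℝ) * t)
      = 2 * Real.sin (t/2) * Real.cos ((2 * (j:ℝ) + 1) * (t/2)) := by
    rw [Real.sin_sub_sin,
      show ((((j:ℝ)+1)*t) - ((j:ℝ)*t))/2 = t/2 by ring,
      show ((((j:ℝ)+1)*t) + ((j:ℝ)*t))/2 = (2*(j:ℝ)+1)*(t/2) by ring]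
  rw [h2] at h1
  apply mul_left_cancel₀ (mul_ne_zero two_ne_zero hs)
  calc 2 * Real.sin (t/2) * (pEval .three j (Real.cos t) * Real.cos (t/2))
      = pEval .three j (Real.cos t) * (2 * Real.sin (t/2) * Real.cos (t/2)) := by ring
    _ = 1 / Real.sqrt π * (2 * Real.sin (t/2) * Real.cos ((2 * (j:ℝ) + 1) * (t/2))) := h1
    _ = 2 * Real.sin (t/2) * (1 / Real.sqrt π * Real.cos ((2 * (j:ℝ) + 1) * (t/2))) := by ring

lemma pEval_four (j : ℕ) (t : ℝ) (hc : Real.cos (t/2) ≠ 0) :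
    pEval .four j (Real.cos t) * Real.sin (t/2)
      = 1 / Real.sqrt π * Real.sin ((2 * (j:ℝ) + 1) * (t/2)) := by
  have h1 := pEval_four_aux j t
  rw [sin_half_double t] at h1
  have h2 : Real.sin (((j:ℝ) + 1) * t) + Real.sin ((j:ℝ) * t)
      = 2 * Real.cos (t/2) * Real.sin ((2 * (j:ℝ) + 1) * (t/2)) := by
    rw [sin_add_sin',
      show ((((j:ℝ)+1)*t) + ((j:ℝ)*t))/2 = (2*(j:ℝ)+1)*(t/2) by ring,
      show ((((j:ℝ)+1)*t) - ((j:ℝ)*t))/2 = t/2 by ring]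
    ring
  rw [h2] at h1
  apply mul_left_cancel₀ (mul_ne_zero two_ne_zero hc)
  calc 2 * Real.cos (t/2) * (pEval .four j (Real.cos t) * Real.sin (t/2))
      = pEval .four j (Real.cos t) * (2 * Real.sin (t/2) * Real.cos (t/2)) := by ring
    _ = 1 / Real.sqrt π * (2 * Real.cos (t/2) * Real.sin ((2 * (j:ℝ) + 1) * (t/2))) := h1
    _ = 2 * Real.cos (t/2) * (1 / Real.sqrt π * Real.sin ((2 * (j:ℝ) + 1) * (t/2))) := by ring

lemma sum_range_split (a b : ℕ) (f : ℕ → ℝ) :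
    ∑ i ∈ range (a + b), f i = (∑ i ∈ range a, f i) + ∑ i ∈ range b, f (a + i) := by
  induction b with
  | zero => simp
  | succ b ih =>
      rw [show a + (b + 1) = (a + b) + 1 by omega, Finset.sum_range_succ, ih,
        Finset.sum_range_succ, add_assoc]

lemma mu_reduce (n m : ℕ) (hm : 0 < m) (hmn : m < n) (P : ℕ → ℝ)
    (hP : ∀ s, 0 < s → s < m → P (n + s) = P (n - s)) (hPn : P n = 0) :
    ∑ j ∈ range (n + m), mufilt n m j * P j = ∑ j ∈ range n, P j := by
  obtain ⟨m', rfl⟩ : ∃ m', m = m' + 1 := ⟨m - 1, by omega⟩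
  rw [sum_range_split n (m' + 1) (fun j => mufilt n (m' + 1) j * P j),
      Finset.sum_range_succ' (fun i => mufilt n (m' + 1) (n + i) * P (n + i)) m']
  have hn0 : mufilt n (m' + 1) (n + 0) * P (n + 0) = 0 := by
    simp only [Nat.add_zero, hPn, mul_zero]
  rw [hn0, add_zero]
  -- split the range-n sums
  have h2 := sum_range_split (n - m') m' (fun j => mufilt n (m' + 1) j * P j)
  rw [show n - m' + m' = n by omega] at h2
  have h3 := sum_range_split (n - m') m' P
  rw [show n - m' + m' = n by omega] at h3
  rw [h2, h3]
  have hfirst : ∀ j ∈ range (n - m'), mufilt n (m' + 1) j * P j = P j := by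
    intro j hj
    rw [Finset.mem_range] at hj
    rw [mufilt, if_pos (by omega), one_mul]
  rw [Finset.sum_congr rfl hfirst, add_assoc]
  congr 1
  -- remaining: ∑_{i<m'} μ(n-m'+i) P(n-m'+i) + ∑_{i<m'} μ(n+(i+1)) P(n+(i+1)) = ∑_{i<m'} P(n-m'+i)
  rw [← Finset.sum_range_reflect (fun i => mufilt n (m' + 1) (n - m' + i) * P (n - m' + i)) m',
      ← Finset.sum_range_reflect (fun i => P (n - m' + i)) m', ← Finset.sum_add_distrib]
  apply Finset.sum_congr rfl
  intro i hi
  rw [Finset.mem_range] at hi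
  have e1 : n - m' + (m' - 1 - i) = n - (i + 1) := by omega
  have e2 : P (n + (i + 1)) = P (n - (i + 1)) := hP (i + 1) (by omega) (by omega)
  rw [e1, e2, ← add_mul]
  have hmu1 : mufilt n (m' + 1) (n - (i + 1)) = ((m' : ℝ) + 1 + (i + 1)) / (2 * (m' + 1)) := by
    rw [mufilt, if_neg (by omega)]
    have : ((n - (i + 1) : ℕ) : ℝ) = (n : ℝ) - (i + 1) := by
      rw [Nat.cast_sub (by omega)]; push_cast; ring
    rw [this]; push_cast; ring_nf
  have hmu2 : mufilt n (m' + 1) (n + (i + 1)) = ((m' : ℝ) + 1 - (i + 1)) / (2 * (m' + 1)) := by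
    rw [mufilt, if_neg (by omega)]
    push_cast; ring_nf
  rw [hmu1, hmu2]
  have : ((m' : ℝ) + 1 + (i + 1)) / (2 * (m' + 1)) + ((m' : ℝ) + 1 - (i + 1)) / (2 * (m' + 1)) = 1 := by
    field_simp
    ring
  rw [this, one_mul]

lemma refl_one (n k s : ℕ) (hn : 0 < n) (hk1 : 1 ≤ k) (hkn : k ≤ n) (hs : s < n) :
    pEval .one (n + s) (xNode .one n k) = - pEval .one (n - s) (xNode .one n k) := by
  have hnR : (n:ℝ) ≠ 0 := Nat.cast_ne_zero.mpr hn.ne'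
  set t := tNode .one n k with ht
  have hx : xNode .one n k = Real.cos t := rfl
  rw [hx, pEval_one _ (by omega), pEval_one _ (by omega)]
  have hcos0 : Real.cos ((n:ℝ) * t) = 0 := by
    have e : (n:ℝ) * t = ((k:ℤ):ℝ) * π - π/2 := by
      rw [ht]; show (n:ℝ) * ((2*(k:ℝ) - 1) * π / (2 * n)) = _
      push_cast; field_simp
    rw [e, Real.cos_int_mul_pi_sub, Real.cos_pi_div_two, mul_zero]
  have key : Real.cos (((n+s:ℕ):ℝ) * t) + Real.cos (((n-s:ℕ):ℝ) * t) = 0 := by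
    rw [Real.cos_add_cos]
    have c1 : ((n+s:ℕ):ℝ) = (n:ℝ) + s := by push_cast; ring
    have c2 : ((n-s:ℕ):ℝ) = (n:ℝ) - s := by rw [Nat.cast_sub hs.le]
    rw [c1, c2, show (((n:ℝ)+s)*t + ((n:ℝ)-s)*t)/2 = (n:ℝ)*t by ring, hcos0]
    ring
  rw [show Real.cos (((n+s:ℕ):ℝ) * t) = -Real.cos (((n-s:ℕ):ℝ) * t) by linarith]
  ring

lemma refl_two (n k s : ℕ) (hn : 0 < n) (hk1 : 1 ≤ k) (hkn : k ≤ n) (hs : s < n) :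
    pEval .two (n + s) (xNode .two n k) = - pEval .two (n - s) (xNode .two n k) := by
  set t := tNode .two n k with ht
  have hx : xNode .two n k = Real.cos t := rfl
  have htv : t = (k:ℝ) * π / ((n:ℝ) + 1) := rfl
  have hsin : Real.sin t ≠ 0 := by
    rw [htv]
    have hk0 : (0:ℝ) < (k:ℝ) := by exact_mod_cast hk1
    apply sinx_ne (k:ℝ) ((n:ℝ)+1) (by positivity) (ne_of_gt hk0)
    rw [abs_of_pos hk0]
    have : (k:ℝ) ≤ (n:ℝ) := Nat.cast_le.mpr hkn
    linarith
  apply mul_right_cancel₀ hsin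
  rw [hx, pEval_two, neg_mul, pEval_two]
  have hsin0 : Real.sin (((n:ℝ) + 1) * t) = 0 := by
    have e : ((n:ℝ) + 1) * t = ((k:ℤ):ℝ) * π := by
      rw [htv]; push_cast; field_simp
    rw [e, Real.sin_int_mul_pi]
  have key : Real.sin ((((n+s:ℕ):ℝ) + 1) * t) + Real.sin ((((n-s:ℕ):ℝ) + 1) * t) = 0 := by
    rw [sin_add_sin']
    have c1 : ((n+s:ℕ):ℝ) = (n:ℝ) + s := by push_cast; ring
    have c2 : ((n-s:ℕ):ℝ) = (n:ℝ) - s := by rw [Nat.cast_sub hs.le]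
    rw [c1, c2, show ((((n:ℝ)+s)+1)*t + (((n:ℝ)-s)+1)*t)/2 = ((n:ℝ)+1)*t by ring, hsin0]
    ring
  rw [show Real.sin ((((n+s:ℕ):ℝ) + 1) * t) = -Real.sin ((((n-s:ℕ):ℝ) + 1) * t) by linarith]
  ring

lemma refl_three (n k s : ℕ) (hn : 0 < n) (hk1 : 1 ≤ k) (hkn : k ≤ n) (hs : s < n) :
    pEval .three (n + s) (xNode .three n k) = - pEval .three (n - s) (xNode .three n k) := by
  set t := tNode .three n k with ht
  have hx : xNode .three n k = Real.cos t := rfl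
  have htv : t = (2*(k:ℝ) - 1) * π / (2*(n:ℝ) + 1) := rfl
  have hk1R : (1:ℝ) ≤ (k:ℝ) := Nat.one_le_cast.mpr hk1
  have hknR : (k:ℝ) ≤ (n:ℝ) := Nat.cast_le.mpr hkn
  have htpos : 0 < t := by
    rw [htv]; apply div_pos (mul_pos (by linarith) Real.pi_pos) (by positivity)
  have htlt : t < π := by
    rw [htv, div_lt_iff₀ (by positivity)]
    nlinarith [Real.pi_pos]
  have hsinh : Real.sin (t/2) ≠ 0 :=
    ne_of_gt (Real.sin_pos_of_pos_of_lt_pi (by linarith) (by linarith [Real.pi_pos]))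
  have hcosh : Real.cos (t/2) ≠ 0 :=
    ne_of_gt (Real.cos_pos_of_mem_Ioo ⟨by linarith [Real.pi_pos], by linarith⟩)
  apply mul_right_cancel₀ hcosh
  rw [hx, pEval_three _ _ hsinh, neg_mul, pEval_three _ _ hsinh]
  have hcos0 : Real.cos ((2*(n:ℝ) + 1) * (t/2)) = 0 := by
    have e : (2*(n:ℝ) + 1) * (t/2) = ((k:ℤ):ℝ) * π - π/2 := by
      rw [htv]; push_cast; field_simp
    rw [e, Real.cos_int_mul_pi_sub, Real.cos_pi_div_two, mul_zero]
  have key : Real.cos ((2*((n+s:ℕ):ℝ)+1) * (t/2)) + Real.cos ((2*((n-s:ℕ):ℝ)+1) * (t/2)) = 0 := by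
    rw [Real.cos_add_cos]
    have c1 : ((n+s:ℕ):ℝ) = (n:ℝ) + s := by push_cast; ring
    have c2 : ((n-s:ℕ):ℝ) = (n:ℝ) - s := by rw [Nat.cast_sub hs.le]
    rw [c1, c2,
      show ((2*((n:ℝ)+s)+1)*(t/2) + (2*((n:ℝ)-s)+1)*(t/2))/2 = (2*(n:ℝ)+1)*(t/2) by ring, hcos0]
    ring
  rw [show Real.cos ((2*((n+s:ℕ):ℝ)+1) * (t/2)) = -Real.cos ((2*((n-s:ℕ):ℝ)+1) * (t/2)) by linarith]
  ring

lemma refl_four (n k s : ℕ) (hn : 0 < n) (hk1 : 1 ≤ k) (hkn : k ≤ n) (hs : s < n) :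
    pEval .four (n + s) (xNode .four n k) = - pEval .four (n - s) (xNode .four n k) := by
  set t := tNode .four n k with ht
  have hx : xNode .four n k = Real.cos t := rfl
  have htv : t = 2*(k:ℝ) * π / (2*(n:ℝ) + 1) := rfl
  have hk1R : (1:ℝ) ≤ (k:ℝ) := Nat.one_le_cast.mpr hk1
  have hknR : (k:ℝ) ≤ (n:ℝ) := Nat.cast_le.mpr hkn
  have htpos : 0 < t := by
    rw [htv]; apply div_pos (mul_pos (by linarith) Real.pi_pos) (by positivity)
  have htlt : t < π := by
    rw [htv, div_lt_iff₀ (by positivity)]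
    nlinarith [Real.pi_pos]
  have hsinh : Real.sin (t/2) ≠ 0 :=
    ne_of_gt (Real.sin_pos_of_pos_of_lt_pi (by linarith) (by linarith [Real.pi_pos]))
  have hcosh : Real.cos (t/2) ≠ 0 :=
    ne_of_gt (Real.cos_pos_of_mem_Ioo ⟨by linarith [Real.pi_pos], by linarith⟩)
  apply mul_right_cancel₀ hsinh
  rw [hx, pEval_four _ _ hcosh, neg_mul, pEval_four _ _ hcosh]
  have hsin0 : Real.sin ((2*(n:ℝ) + 1) * (t/2)) = 0 := by
    have e : (2*(n:ℝ) + 1) * (t/2) = ((k:ℤ):ℝ) * π := by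
      rw [htv]; push_cast; field_simp
    rw [e, Real.sin_int_mul_pi]
  have key : Real.sin ((2*((n+s:ℕ):ℝ)+1) * (t/2)) + Real.sin ((2*((n-s:ℕ):ℝ)+1) * (t/2)) = 0 := by
    rw [sin_add_sin']
    have c1 : ((n+s:ℕ):ℝ) = (n:ℝ) + s := by push_cast; ring
    have c2 : ((n-s:ℕ):ℝ) = (n:ℝ) - s := by rw [Nat.cast_sub hs.le]
    rw [c1, c2,
      show ((2*((n:ℝ)+s)+1)*(t/2) + (2*((n:ℝ)-s)+1)*(t/2))/2 = (2*(n:ℝ)+1)*(t/2) by ring, hsin0]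
    ring
  rw [show Real.sin ((2*((n+s:ℕ):ℝ)+1) * (t/2)) = -Real.sin ((2*((n-s:ℕ):ℝ)+1) * (t/2)) by linarith]
  ring

lemma refl_all (w : ChebKind) (n k s : ℕ) (hn : 0 < n) (hk1 : 1 ≤ k) (hkn : k ≤ n) (hs : s < n) :
    pEval w (n + s) (xNode w n k) = - pEval w (n - s) (xNode w n k) := by
  cases w
  · exact refl_one n k s hn hk1 hkn hs
  · exact refl_two n k s hn hk1 hkn hs
  · exact refl_three n k s hn hk1 hkn hs
  · exact refl_four n k s hn hk1 hkn hs

lemma kernel_one (n k l : ℕ) (hn : 0 < n) (hk1 : 1 ≤ k) (hkn : k ≤ n) (hl1 : 1 ≤ l) (hln : l ≤ n) :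
    lam .one n k *
      ∑ j ∈ range n, pEval .one j (xNode .one n k) * pEval .one j (xNode .one n l)
      = if l = k then 1 else 0 := by
  have hπ := Real.pi_pos
  obtain ⟨n', rfl⟩ : ∃ n', n = n' + 1 := ⟨n - 1, by omega⟩
  have hnR : (0:ℝ) < ((n'+1 : ℕ):ℝ) := by positivity
  set t := tNode ChebKind.one (n'+1) k with ht
  set u := tNode ChebKind.one (n'+1) l with hu
  have hxk : xNode ChebKind.one (n'+1) k = Real.cos t := rfl
  have hxl : xNode ChebKind.one (n'+1) l = Real.cos u := rfl
  have htv : t = (2*(k:ℝ) - 1) * π / (2 * ((n'+1:ℕ):ℝ)) := by rw [ht]; push_cast [tNode]; ring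
  have huv : u = (2*(l:ℝ) - 1) * π / (2 * ((n'+1:ℕ):ℝ)) := by rw [hu]; push_cast [tNode]; ring
  have hlam : lam ChebKind.one (n'+1) k = π / ((n'+1:ℕ):ℝ) := rfl
  have e0 : pEval .one 0 (Real.cos t) * pEval .one 0 (Real.cos u) = 1/π := by
    rw [pEval_one_zero, pEval_one_zero, div_mul_div_comm, one_mul, Real.mul_self_sqrt hπ.le]
  have eterm : ∀ j : ℕ, pEval .one (j+1) (Real.cos t) * pEval .one (j+1) (Real.cos u)
      = (1/π) * (Real.cos (((j+1:ℕ):ℝ)*(t-u)) + Real.cos (((j+1:ℕ):ℝ)*(t+u))) := by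
    intro j
    rw [pEval_one _ (by omega), pEval_one _ (by omega)]
    have h2 : Real.sqrt (2/π) * Real.sqrt (2/π) = 2/π := Real.mul_self_sqrt (by positivity)
    have h3 := two_cos_cos (((j+1:ℕ):ℝ)*t) (((j+1:ℕ):ℝ)*u)
    rw [show ((j+1:ℕ):ℝ)*t - ((j+1:ℕ):ℝ)*u = ((j+1:ℕ):ℝ)*(t-u) by ring,
        show ((j+1:ℕ):ℝ)*t + ((j+1:ℕ):ℝ)*u = ((j+1:ℕ):ℝ)*(t+u) by ring] at h3
    rw [show Real.sqrt (2/π) * Real.cos (((j+1:ℕ):ℝ)*t) * (Real.sqrt (2/π) * Real.cos (((j+1:ℕ):ℝ)*u))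
        = (Real.sqrt (2/π) * Real.sqrt (2/π)) * (Real.cos (((j+1:ℕ):ℝ)*t) * Real.cos (((j+1:ℕ):ℝ)*u)) by ring,
       h2, ← h3]
    ring
  have hsum : (∑ j ∈ range (n'+1), pEval .one j (Real.cos t) * pEval .one j (Real.cos u))
      = (1/π) * ((∑ j ∈ range (n'+1), Real.cos ((j:ℝ)*(t-u)))
          + (∑ j ∈ range (n'+1), Real.cos ((j:ℝ)*(t+u))) - 1) := by
    rw [Finset.sum_range_succ' (fun j => pEval .one j (Real.cos t) * pEval .one j (Real.cos u)) n',
        Finset.sum_range_succ' (fun j => Real.cos ((j:ℝ)*(t-u))) n',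
        Finset.sum_range_succ' (fun j => Real.cos ((j:ℝ)*(t+u))) n']
    rw [Finset.sum_congr rfl (fun j _ => eterm j)]
    simp only [Nat.cast_zero, zero_mul, Real.cos_zero, e0]
    rw [← Finset.mul_sum, Finset.sum_add_distrib]
    ring
  rw [hxk, hxl, hsum, hlam]
  by_cases hkl : l = k
  · rw [if_pos hkl]
    have hut : u = t := by rw [hu, ht, hkl]
    rw [hut, sub_self]
    have hd : (∑ j ∈ range (n'+1), Real.cos ((j:ℝ) * 0)) = ((n'+1:ℕ):ℝ) := cosD_zero (n'+1)
    have hθ : ((n'+1:ℕ):ℝ) * (t+t) = ((2*(k:ℤ)-1 : ℤ):ℝ) * π := by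
      rw [htv]; push_cast; field_simp; ring
    have hs : Real.sin ((t+t)/2) ≠ 0 := by
      rw [show (t+t)/2 = (2*(k:ℝ)-1) * π / (2*((n'+1:ℕ):ℝ)) by rw [htv]; ring]
      apply sinx_ne _ _ (by positivity)
      · have : (1:ℝ) ≤ (k:ℝ) := by exact_mod_cast hk1
        intro h; nlinarith
      · have h1 : (1:ℝ) ≤ (k:ℝ) := by exact_mod_cast hk1
        have h2 : (k:ℝ) ≤ ((n'+1:ℕ):ℝ) := by exact_mod_cast hkn
        rw [abs_of_pos (by nlinarith)]
        nlinarith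
    rw [hd, cosD_eq (n'+1) (2*(k:ℤ)-1) (t+t) hθ hs,
        Odd.neg_one_zpow ⟨(k:ℤ)-1, by ring⟩]
    field_simp; ring
  · rw [if_neg hkl]
    have hklR : (k:ℝ) ≠ (l:ℝ) := by
      intro h; exact hkl (by exact_mod_cast h.symm)
    have h1k : (1:ℝ) ≤ (k:ℝ) := by exact_mod_cast hk1
    have h1l : (1:ℝ) ≤ (l:ℝ) := by exact_mod_cast hl1
    have h2k : (k:ℝ) ≤ ((n'+1:ℕ):ℝ) := by exact_mod_cast hkn
    have h2l : (l:ℝ) ≤ ((n'+1:ℕ):ℝ) := by exact_mod_cast hln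
    have hθ1 : ((n'+1:ℕ):ℝ) * (t-u) = (((k:ℤ)-l : ℤ):ℝ) * π := by
      rw [htv, huv]; push_cast; field_simp; ring
    have hs1 : Real.sin ((t-u)/2) ≠ 0 := by
      rw [show (t-u)/2 = ((k:ℝ)-l) * π / (2*((n'+1:ℕ):ℝ)) by rw [htv, huv]; field_simp; ring]
      apply sinx_ne _ _ (by positivity) (sub_ne_zero.mpr hklR)
      rw [abs_lt]; constructor <;> nlinarith
    have hθ2 : ((n'+1:ℕ):ℝ) * (t+u) = (((k:ℤ)+l-1 : ℤ):ℝ) * π := by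
      rw [htv, huv]; push_cast; field_simp; ring
    have hs2 : Real.sin ((t+u)/2) ≠ 0 := by
      rw [show (t+u)/2 = ((k:ℝ)+l-1) * π / (2*((n'+1:ℕ):ℝ)) by rw [htv, huv]; field_simp; ring]
      apply sinx_ne _ _ (by positivity) (by intro h; nlinarith)
      rw [abs_of_pos (by nlinarith)]
      nlinarith
    rw [cosD_eq (n'+1) ((k:ℤ)-l) (t-u) hθ1 hs1, cosD_eq (n'+1) ((k:ℤ)+l-1) (t+u) hθ2 hs2]
    have hpar : (-1:ℝ)^((k:ℤ)+l-1) = -(-1:ℝ)^((k:ℤ)-l) := by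
      rw [show (k:ℤ)+l-1 = ((k:ℤ)-l) + (2*l-1) by ring,
          zpow_add₀ (by norm_num : (-1:ℝ) ≠ 0),
          Odd.neg_one_zpow (n := 2*(l:ℤ)-1) ⟨(l:ℤ)-1, by ring⟩]
      ring
    rw [hpar]
    ring

lemma shift_sum (N : ℕ) (θ : ℝ) :
    (∑ j ∈ range N, Real.cos (((j:ℝ) + 1) * θ)) = (∑ j ∈ range (N+1), Real.cos ((j:ℝ) * θ)) - 1 := by
  rw [Finset.sum_range_succ' (fun j => Real.cos ((j:ℝ) * θ)) N]
  push_cast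
  simp

lemma kernel_two (n k l : ℕ) (hn : 0 < n) (hk1 : 1 ≤ k) (hkn : k ≤ n) (hl1 : 1 ≤ l) (hln : l ≤ n) :
    lam .two n k *
      ∑ j ∈ range n, pEval .two j (xNode .two n k) * pEval .two j (xNode .two n l)
      = if l = k then 1 else 0 := by
  have hπ := Real.pi_pos
  have hnR : (0:ℝ) < (n:ℝ) := by exact_mod_cast hn
  have h1k : (1:ℝ) ≤ (k:ℝ) := by exact_mod_cast hk1
  have h1l : (1:ℝ) ≤ (l:ℝ) := by exact_mod_cast hl1
  have h2k : (k:ℝ) ≤ (n:ℝ) := by exact_mod_cast hkn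
  have h2l : (l:ℝ) ≤ (n:ℝ) := by exact_mod_cast hln
  set t := tNode ChebKind.two n k with ht
  set u := tNode ChebKind.two n l with hu
  have hxk : xNode ChebKind.two n k = Real.cos t := rfl
  have hxl : xNode ChebKind.two n l = Real.cos u := rfl
  have htv : t = (k:ℝ) * π / ((n:ℝ) + 1) := rfl
  have huv : u = (l:ℝ) * π / ((n:ℝ) + 1) := rfl
  have hlam : lam ChebKind.two n k = π / ((n:ℝ)+1) * Real.sin t ^ 2 := rfl
  have hst : Real.sin t ≠ 0 := by
    rw [htv]
    apply sinx_ne (k:ℝ) ((n:ℝ)+1) (by positivity) (by positivity)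
    rw [abs_of_pos (by positivity)]; linarith
  have hsu : Real.sin u ≠ 0 := by
    rw [huv]
    apply sinx_ne (l:ℝ) ((n:ℝ)+1) (by positivity) (by positivity)
    rw [abs_of_pos (by positivity)]; linarith
  have etermM : ∀ j : ℕ,
      pEval .two j (Real.cos t) * pEval .two j (Real.cos u) * (Real.sin t * Real.sin u)
        = (1/π) * (Real.cos (((j:ℝ)+1) * (t-u)) - Real.cos (((j:ℝ)+1) * (t+u))) := by
    intro j
    have h2 : Real.sqrt (2/π) * Real.sqrt (2/π) = 2/π := Real.mul_self_sqrt (by positivity)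
    have h3 := two_sin_sin (((j:ℝ)+1)*t) (((j:ℝ)+1)*u)
    rw [show ((j:ℝ)+1)*t - ((j:ℝ)+1)*u = ((j:ℝ)+1)*(t-u) by ring,
        show ((j:ℝ)+1)*t + ((j:ℝ)+1)*u = ((j:ℝ)+1)*(t+u) by ring] at h3
    calc pEval .two j (Real.cos t) * pEval .two j (Real.cos u) * (Real.sin t * Real.sin u)
        = (pEval .two j (Real.cos t) * Real.sin t) * (pEval .two j (Real.cos u) * Real.sin u) := by
          ring
      _ = (Real.sqrt (2/π) * Real.sin (((j:ℝ)+1)*t)) * (Real.sqrt (2/π) * Real.sin (((j:ℝ)+1)*u)) := by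
          rw [pEval_two, pEval_two]
      _ = (Real.sqrt (2/π) * Real.sqrt (2/π)) * (Real.sin (((j:ℝ)+1)*t) * Real.sin (((j:ℝ)+1)*u)) := by
          ring
      _ = (2/π) * (Real.sin (((j:ℝ)+1)*t) * Real.sin (((j:ℝ)+1)*u)) := by
          rw [h2]
      _ = (1/π) * (Real.cos (((j:ℝ)+1) * (t-u)) - Real.cos (((j:ℝ)+1) * (t+u))) := by
          rw [← h3]; ring
  have hsumM : (∑ j ∈ range n, pEval .two j (Real.cos t) * pEval .two j (Real.cos u))
        * (Real.sin t * Real.sin u)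
      = (1/π) * ((∑ j ∈ range (n+1), Real.cos ((j:ℝ) * (t-u)))
          - (∑ j ∈ range (n+1), Real.cos ((j:ℝ) * (t+u)))) := by
    rw [Finset.sum_mul, Finset.sum_congr rfl (fun j _ => etermM j), ← Finset.mul_sum,
        Finset.sum_sub_distrib, shift_sum, shift_sum]
    ring
  rw [hxk, hxl]
  apply mul_right_cancel₀ (mul_ne_zero hst hsu)
  rw [mul_assoc, hsumM, hlam]
  by_cases hkl : l = k
  · rw [if_pos hkl]
    have hut : u = t := by rw [hu, ht, hkl]
    rw [hut, sub_self]
    have hd : (∑ j ∈ range (n+1), Real.cos ((j:ℝ) * 0)) = ((n+1:ℕ):ℝ) := cosD_zero (n+1)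
    have hθ : ((n+1:ℕ):ℝ) * (t+t) = ((2*(k:ℤ) : ℤ):ℝ) * π := by
      rw [htv]; push_cast; field_simp; ring
    have hs : Real.sin ((t+t)/2) ≠ 0 := by
      rw [show (t+t)/2 = t by ring, htv]
      apply sinx_ne (k:ℝ) ((n:ℝ)+1) (by positivity) (by positivity)
      rw [abs_of_pos (by positivity)]; linarith
    rw [hd, cosD_eq (n+1) (2*(k:ℤ)) (t+t) hθ hs,
        Even.neg_one_zpow ⟨(k:ℤ), by ring⟩]
    push_cast
    field_simp
    ring
  · rw [if_neg hkl]
    have hklR : (k:ℝ) ≠ (l:ℝ) := by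
      intro h; exact hkl (by exact_mod_cast h.symm)
    have hθ1 : ((n+1:ℕ):ℝ) * (t-u) = (((k:ℤ)-l : ℤ):ℝ) * π := by
      rw [htv, huv]; push_cast; field_simp
    have hs1 : Real.sin ((t-u)/2) ≠ 0 := by
      rw [show (t-u)/2 = ((k:ℝ)-l) * π / (2*((n:ℝ)+1)) by rw [htv, huv]; field_simp]
      apply sinx_ne _ _ (by positivity) (sub_ne_zero.mpr hklR)
      rw [abs_lt]; constructor <;> nlinarith
    have hθ2 : ((n+1:ℕ):ℝ) * (t+u) = (((k:ℤ)+l : ℤ):ℝ) * π := by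
      rw [htv, huv]; push_cast; field_simp
    have hs2 : Real.sin ((t+u)/2) ≠ 0 := by
      rw [show (t+u)/2 = ((k:ℝ)+l) * π / (2*((n:ℝ)+1)) by rw [htv, huv]; field_simp]
      apply sinx_ne _ _ (by positivity) (by positivity)
      rw [abs_of_pos (by positivity)]; nlinarith
    rw [cosD_eq (n+1) ((k:ℤ)-l) (t-u) hθ1 hs1, cosD_eq (n+1) ((k:ℤ)+l) (t+u) hθ2 hs2]
    have hpar : (-1:ℝ)^((k:ℤ)+l) = (-1:ℝ)^((k:ℤ)-l) := by
      rw [show (k:ℤ)+l = ((k:ℤ)-l) + 2*l by ring,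
          zpow_add₀ (by norm_num : (-1:ℝ) ≠ 0),
          Even.neg_one_zpow (n := 2*(l:ℤ)) ⟨(l:ℤ), by ring⟩]
      ring
    rw [hpar]
    ring

lemma kernel_three (n k l : ℕ) (hn : 0 < n) (hk1 : 1 ≤ k) (hkn : k ≤ n) (hl1 : 1 ≤ l) (hln : l ≤ n) :
    lam .three n k *
      ∑ j ∈ range n, pEval .three j (xNode .three n k) * pEval .three j (xNode .three n l)
      = if l = k then 1 else 0 := by
  have hπ := Real.pi_pos
  have hnR : (0:ℝ) < (n:ℝ) := by exact_mod_cast hn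
  have h1k : (1:ℝ) ≤ (k:ℝ) := by exact_mod_cast hk1
  have h1l : (1:ℝ) ≤ (l:ℝ) := by exact_mod_cast hl1
  have h2k : (k:ℝ) ≤ (n:ℝ) := by exact_mod_cast hkn
  have h2l : (l:ℝ) ≤ (n:ℝ) := by exact_mod_cast hln
  set t := tNode ChebKind.three n k with ht
  set u := tNode ChebKind.three n l with hu
  have hxk : xNode ChebKind.three n k = Real.cos t := rfl
  have hxl : xNode ChebKind.three n l = Real.cos u := rfl
  have htv : t = (2*(k:ℝ) - 1) * π / (2*(n:ℝ) + 1) := rfl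
  have huv : u = (2*(l:ℝ) - 1) * π / (2*(n:ℝ) + 1) := rfl
  have hlam : lam ChebKind.three n k = 4*π / (2*(n:ℝ)+1) * Real.cos (t/2) ^ 2 := rfl
  have htpos : 0 < t := by
    rw [htv]; exact div_pos (mul_pos (by linarith) hπ) (by positivity)
  have htlt : t < π := by
    rw [htv, div_lt_iff₀ (by positivity)]; nlinarith
  have hupos : 0 < u := by
    rw [huv]; exact div_pos (mul_pos (by linarith) hπ) (by positivity)
  have hult : u < π := by
    rw [huv, div_lt_iff₀ (by positivity)]; nlinarith
  have hsht : Real.sin (t/2) ≠ 0 :=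
    ne_of_gt (Real.sin_pos_of_pos_of_lt_pi (by linarith) (by linarith))
  have hcht : Real.cos (t/2) ≠ 0 :=
    ne_of_gt (Real.cos_pos_of_mem_Ioo ⟨by linarith, by linarith⟩)
  have hshu : Real.sin (u/2) ≠ 0 :=
    ne_of_gt (Real.sin_pos_of_pos_of_lt_pi (by linarith) (by linarith))
  have hchu : Real.cos (u/2) ≠ 0 :=
    ne_of_gt (Real.cos_pos_of_mem_Ioo ⟨by linarith, by linarith⟩)
  have h2 : 1/Real.sqrt π * (1/Real.sqrt π) = 1/π := by
    rw [div_mul_div_comm, one_mul, Real.mul_self_sqrt hπ.le]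
  have etermM : ∀ j : ℕ,
      pEval .three j (Real.cos t) * pEval .three j (Real.cos u) * (Real.cos (t/2) * Real.cos (u/2))
        = (1/(2*π)) * (Real.cos ((2*(j:ℝ)+1) * ((t-u)/2)) + Real.cos ((2*(j:ℝ)+1) * ((t+u)/2))) := by
    intro j
    have h3 := two_cos_cos ((2*(j:ℝ)+1)*(t/2)) ((2*(j:ℝ)+1)*(u/2))
    rw [show (2*(j:ℝ)+1)*(t/2) - (2*(j:ℝ)+1)*(u/2) = (2*(j:ℝ)+1)*((t-u)/2) by ring,
        show (2*(j:ℝ)+1)*(t/2) + (2*(j:ℝ)+1)*(u/2) = (2*(j:ℝ)+1)*((t+u)/2) by ring] at h3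
    calc pEval .three j (Real.cos t) * pEval .three j (Real.cos u) * (Real.cos (t/2) * Real.cos (u/2))
        = (pEval .three j (Real.cos t) * Real.cos (t/2)) * (pEval .three j (Real.cos u) * Real.cos (u/2)) := by
          ring
      _ = (1/Real.sqrt π * Real.cos ((2*(j:ℝ)+1)*(t/2))) * (1/Real.sqrt π * Real.cos ((2*(j:ℝ)+1)*(u/2))) := by
          rw [pEval_three _ _ hsht, pEval_three _ _ hshu]
      _ = (1/Real.sqrt π * (1/Real.sqrt π)) * (Real.cos ((2*(j:ℝ)+1)*(t/2)) * Real.cos ((2*(j:ℝ)+1)*(u/2))) := by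
          ring
      _ = (1/π) * (Real.cos ((2*(j:ℝ)+1)*(t/2)) * Real.cos ((2*(j:ℝ)+1)*(u/2))) := by rw [h2]
      _ = (1/(2*π)) * (Real.cos ((2*(j:ℝ)+1) * ((t-u)/2)) + Real.cos ((2*(j:ℝ)+1) * ((t+u)/2))) := by
          rw [← h3]; ring
  have hsumM : (∑ j ∈ range n, pEval .three j (Real.cos t) * pEval .three j (Real.cos u))
        * (Real.cos (t/2) * Real.cos (u/2))
      = (1/(2*π)) * ((∑ j ∈ range n, Real.cos ((2*(j:ℝ)+1) * ((t-u)/2)))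
          + (∑ j ∈ range n, Real.cos ((2*(j:ℝ)+1) * ((t+u)/2)))) := by
    rw [Finset.sum_mul, Finset.sum_congr rfl (fun j _ => etermM j), ← Finset.mul_sum,
        Finset.sum_add_distrib]
  rw [hxk, hxl]
  apply mul_right_cancel₀ (mul_ne_zero hcht hchu)
  rw [mul_assoc, hsumM, hlam]
  by_cases hkl : l = k
  · rw [if_pos hkl]
    have hut : u = t := by rw [hu, ht, hkl]
    rw [hut, sub_self, zero_div]
    have hd : (∑ j ∈ range n, Real.cos ((2*(j:ℝ)+1) * 0)) = (n:ℝ) := cosD'_zero n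
    have hθ : (2*(n:ℕ)+1 : ℝ) * ((t+t)/2) = ((2*(k:ℤ)-1 : ℤ):ℝ) * π := by
      rw [htv]; push_cast; field_simp; ring
    have hs : Real.sin ((t+t)/2) ≠ 0 := by
      rw [show (t+t)/2 = t by ring]
      exact ne_of_gt (Real.sin_pos_of_pos_of_lt_pi htpos htlt)
    rw [hd, cosD'_eq n (2*(k:ℤ)-1) ((t+t)/2) hθ hs,
        Odd.neg_one_zpow (n := 2*(k:ℤ)-1) ⟨(k:ℤ)-1, by ring⟩]
    field_simp
    ring
  · rw [if_neg hkl]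
    have hklR : (k:ℝ) ≠ (l:ℝ) := by
      intro h; exact hkl (by exact_mod_cast h.symm)
    have hθ1 : (2*(n:ℕ)+1 : ℝ) * ((t-u)/2) = (((k:ℤ)-l : ℤ):ℝ) * π := by
      rw [htv, huv]; push_cast; field_simp; ring
    have hs1 : Real.sin ((t-u)/2) ≠ 0 := by
      rw [show (t-u)/2 = ((k:ℝ)-l) * π / (2*(n:ℝ)+1) by rw [htv, huv]; field_simp; ring]
      apply sinx_ne _ _ (by positivity) (sub_ne_zero.mpr hklR)
      rw [abs_lt]; constructor <;> nlinarith
    have hθ2 : (2*(n:ℕ)+1 : ℝ) * ((t+u)/2) = (((k:ℤ)+l-1 : ℤ):ℝ) * π := by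
      rw [htv, huv]; push_cast; field_simp; ring
    have hs2 : Real.sin ((t+u)/2) ≠ 0 := by
      rw [show (t+u)/2 = ((k:ℝ)+l-1) * π / (2*(n:ℝ)+1) by rw [htv, huv]; field_simp; ring]
      apply sinx_ne _ _ (by positivity) (by intro h; nlinarith)
      rw [abs_of_pos (by nlinarith)]; nlinarith
    rw [cosD'_eq n ((k:ℤ)-l) ((t-u)/2) hθ1 hs1, cosD'_eq n ((k:ℤ)+l-1) ((t+u)/2) hθ2 hs2]
    have hpar : (-1:ℝ)^((k:ℤ)+l-1) = -(-1:ℝ)^((k:ℤ)-l) := by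
      rw [show (k:ℤ)+l-1 = ((k:ℤ)-l) + (2*l-1) by ring,
          zpow_add₀ (by norm_num : (-1:ℝ) ≠ 0),
          Odd.neg_one_zpow (n := 2*(l:ℤ)-1) ⟨(l:ℤ)-1, by ring⟩]
      ring
    rw [hpar]
    ring

lemma kernel_four (n k l : ℕ) (hn : 0 < n) (hk1 : 1 ≤ k) (hkn : k ≤ n) (hl1 : 1 ≤ l) (hln : l ≤ n) :
    lam .four n k *
      ∑ j ∈ range n, pEval .four j (xNode .four n k) * pEval .four j (xNode .four n l)
      = if l = k then 1 else 0 := by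
  have hπ := Real.pi_pos
  have hnR : (0:ℝ) < (n:ℝ) := by exact_mod_cast hn
  have h1k : (1:ℝ) ≤ (k:ℝ) := by exact_mod_cast hk1
  have h1l : (1:ℝ) ≤ (l:ℝ) := by exact_mod_cast hl1
  have h2k : (k:ℝ) ≤ (n:ℝ) := by exact_mod_cast hkn
  have h2l : (l:ℝ) ≤ (n:ℝ) := by exact_mod_cast hln
  set t := tNode ChebKind.four n k with ht
  set u := tNode ChebKind.four n l with hu
  have hxk : xNode ChebKind.four n k = Real.cos t := rfl
  have hxl : xNode ChebKind.four n l = Real.cos u := rfl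
  have htv : t = 2*(k:ℝ) * π / (2*(n:ℝ) + 1) := rfl
  have huv : u = 2*(l:ℝ) * π / (2*(n:ℝ) + 1) := rfl
  have hlam : lam ChebKind.four n k = 4*π / (2*(n:ℝ)+1) * Real.sin (t/2) ^ 2 := rfl
  have htpos : 0 < t := by
    rw [htv]; exact div_pos (mul_pos (by linarith) hπ) (by positivity)
  have htlt : t < π := by
    rw [htv, div_lt_iff₀ (by positivity)]; nlinarith
  have hupos : 0 < u := by
    rw [huv]; exact div_pos (mul_pos (by linarith) hπ) (by positivity)
  have hult : u < π := by
    rw [huv, div_lt_iff₀ (by positivity)]; nlinarith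
  have hsht : Real.sin (t/2) ≠ 0 :=
    ne_of_gt (Real.sin_pos_of_pos_of_lt_pi (by linarith) (by linarith))
  have hcht : Real.cos (t/2) ≠ 0 :=
    ne_of_gt (Real.cos_pos_of_mem_Ioo ⟨by linarith, by linarith⟩)
  have hshu : Real.sin (u/2) ≠ 0 :=
    ne_of_gt (Real.sin_pos_of_pos_of_lt_pi (by linarith) (by linarith))
  have hchu : Real.cos (u/2) ≠ 0 :=
    ne_of_gt (Real.cos_pos_of_mem_Ioo ⟨by linarith, by linarith⟩)
  have h2 : 1/Real.sqrt π * (1/Real.sqrt π) = 1/π := by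
    rw [div_mul_div_comm, one_mul, Real.mul_self_sqrt hπ.le]
  have etermM : ∀ j : ℕ,
      pEval .four j (Real.cos t) * pEval .four j (Real.cos u) * (Real.sin (t/2) * Real.sin (u/2))
        = (1/(2*π)) * (Real.cos ((2*(j:ℝ)+1) * ((t-u)/2)) - Real.cos ((2*(j:ℝ)+1) * ((t+u)/2))) := by
    intro j
    have h3 := two_sin_sin ((2*(j:ℝ)+1)*(t/2)) ((2*(j:ℝ)+1)*(u/2))
    rw [show (2*(j:ℝ)+1)*(t/2) - (2*(j:ℝ)+1)*(u/2) = (2*(j:ℝ)+1)*((t-u)/2) by ring,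
        show (2*(j:ℝ)+1)*(t/2) + (2*(j:ℝ)+1)*(u/2) = (2*(j:ℝ)+1)*((t+u)/2) by ring] at h3
    calc pEval .four j (Real.cos t) * pEval .four j (Real.cos u) * (Real.sin (t/2) * Real.sin (u/2))
        = (pEval .four j (Real.cos t) * Real.sin (t/2)) * (pEval .four j (Real.cos u) * Real.sin (u/2)) := by
          ring
      _ = (1/Real.sqrt π * Real.sin ((2*(j:ℝ)+1)*(t/2))) * (1/Real.sqrt π * Real.sin ((2*(j:ℝ)+1)*(u/2))) := by
          rw [pEval_four _ _ hcht, pEval_four _ _ hchu]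
      _ = (1/Real.sqrt π * (1/Real.sqrt π)) * (Real.sin ((2*(j:ℝ)+1)*(t/2)) * Real.sin ((2*(j:ℝ)+1)*(u/2))) := by
          ring
      _ = (1/π) * (Real.sin ((2*(j:ℝ)+1)*(t/2)) * Real.sin ((2*(j:ℝ)+1)*(u/2))) := by rw [h2]
      _ = (1/(2*π)) * (Real.cos ((2*(j:ℝ)+1) * ((t-u)/2)) - Real.cos ((2*(j:ℝ)+1) * ((t+u)/2))) := by
          rw [← h3]; ring
  have hsumM : (∑ j ∈ range n, pEval .four j (Real.cos t) * pEval .four j (Real.cos u))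
        * (Real.sin (t/2) * Real.sin (u/2))
      = (1/(2*π)) * ((∑ j ∈ range n, Real.cos ((2*(j:ℝ)+1) * ((t-u)/2)))
          - (∑ j ∈ range n, Real.cos ((2*(j:ℝ)+1) * ((t+u)/2)))) := by
    rw [Finset.sum_mul, Finset.sum_congr rfl (fun j _ => etermM j), ← Finset.mul_sum,
        Finset.sum_sub_distrib]
  rw [hxk, hxl]
  apply mul_right_cancel₀ (mul_ne_zero hsht hshu)
  rw [mul_assoc, hsumM, hlam]
  by_cases hkl : l = k
  · rw [if_pos hkl]
    have hut : u = t := by rw [hu, ht, hkl]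
    rw [hut, sub_self, zero_div]
    have hd : (∑ j ∈ range n, Real.cos ((2*(j:ℝ)+1) * 0)) = (n:ℝ) := cosD'_zero n
    have hθ : (2*(n:ℕ)+1 : ℝ) * ((t+t)/2) = ((2*(k:ℤ) : ℤ):ℝ) * π := by
      rw [htv]; push_cast; field_simp; ring
    have hs : Real.sin ((t+t)/2) ≠ 0 := by
      rw [show (t+t)/2 = t by ring]
      exact ne_of_gt (Real.sin_pos_of_pos_of_lt_pi htpos htlt)
    rw [hd, cosD'_eq n (2*(k:ℤ)) ((t+t)/2) hθ hs,
        Even.neg_one_zpow (n := 2*(k:ℤ)) ⟨(k:ℤ), by ring⟩]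
    field_simp
    ring
  · rw [if_neg hkl]
    have hklR : (k:ℝ) ≠ (l:ℝ) := by
      intro h; exact hkl (by exact_mod_cast h.symm)
    have hθ1 : (2*(n:ℕ)+1 : ℝ) * ((t-u)/2) = (((k:ℤ)-l : ℤ):ℝ) * π := by
      rw [htv, huv]; push_cast; field_simp
    have hs1 : Real.sin ((t-u)/2) ≠ 0 := by
      rw [show (t-u)/2 = ((k:ℝ)-l) * π / (2*(n:ℝ)+1) by rw [htv, huv]; field_simp]
      apply sinx_ne _ _ (by positivity) (sub_ne_zero.mpr hklR)
      rw [abs_lt]; constructor <;> nlinarith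
    have hθ2 : (2*(n:ℕ)+1 : ℝ) * ((t+u)/2) = (((k:ℤ)+l : ℤ):ℝ) * π := by
      rw [htv, huv]; push_cast; field_simp
    have hs2 : Real.sin ((t+u)/2) ≠ 0 := by
      rw [show (t+u)/2 = ((k:ℝ)+l) * π / (2*(n:ℝ)+1) by rw [htv, huv]; field_simp]
      apply sinx_ne _ _ (by positivity) (by positivity)
      rw [abs_of_pos (by positivity)]; nlinarith
    rw [cosD'_eq n ((k:ℤ)-l) ((t-u)/2) hθ1 hs1, cosD'_eq n ((k:ℤ)+l) ((t+u)/2) hθ2 hs2]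
    have hpar : (-1:ℝ)^((k:ℤ)+l) = (-1:ℝ)^((k:ℤ)-l) := by
      rw [show (k:ℤ)+l = ((k:ℤ)-l) + 2*l by ring,
          zpow_add₀ (by norm_num : (-1:ℝ) ≠ 0),
          Even.neg_one_zpow (n := 2*(l:ℤ)) ⟨(l:ℤ), by ring⟩]
      ring
    rw [hpar]
    ring

lemma Phi_delta (w : ChebKind) (n m : ℕ) (hm : 0 < m) (hmn : m < n) (k l : ℕ)
    (hk1 : 1 ≤ k) (hkn : k ≤ n) (hl1 : 1 ≤ l) (hln : l ≤ n) :
    Phi w n m k (xNode w n l) = if l = k then 1 else 0 := by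
  have hn : 0 < n := lt_trans hm hmn
  have hred : ∑ j ∈ range (n+m),
        mufilt n m j * pEval w j (xNode w n k) * pEval w j (xNode w n l)
      = ∑ j ∈ range n, pEval w j (xNode w n k) * pEval w j (xNode w n l) := by
    rw [Finset.sum_congr rfl (fun j _ => mul_assoc (mufilt n m j) _ _)]
    apply mu_reduce n m hm hmn _ _ _
    · intro s hs0 hsm
      rw [refl_all w n k s hn hk1 hkn (by omega), refl_all w n l s hn hl1 hln (by omega)]
      ring
    · have h := refl_all w n k 0 hn hk1 hkn (by omega)
      rw [Nat.add_zero, Nat.sub_zero] at h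
      have : pEval w n (xNode w n k) = 0 := by linarith
      rw [this, zero_mul]
  rw [Phi, hred]
  cases w
  · exact kernel_one n k l hn hk1 hkn hl1 hln
  · exact kernel_two n k l hn hk1 hkn hl1 hln
  · exact kernel_three n k l hn hk1 hkn hl1 hln
  · exact kernel_four n k l hn hk1 hkn hl1 hln



/-- the fundamental VP polynomials satisfy `Φ_{n,k}^m(x_j^n)=δ_{jk}`,
hence `V_n^m f` interpolates `f` at the Chebyshev zeros. -/
theorem stmt13 (w : ChebKind) (n m : ℕ) (hm : 0 < m) (hmn : m < n) :
    (∀ j ∈ Finset.Icc 1 n, ∀ k ∈ Finset.Icc 1 n,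
        Phi w n m k (xNode w n j) = if j = k then 1 else 0) ∧
    (∀ f : ℝ → ℝ, ∀ j ∈ Finset.Icc 1 n, VP w n m f (xNode w n j) = f (xNode w n j)) := by
  have hdelta : ∀ j ∈ Finset.Icc 1 n, ∀ k ∈ Finset.Icc 1 n,
      Phi w n m k (xNode w n j) = if j = k then 1 else 0 := by
    intro j hj k hk
    rw [Finset.mem_Icc] at hj hk
    exact Phi_delta w n m hm hmn k j hk.1 hk.2 hj.1 hj.2
  refine ⟨hdelta, ?_⟩
  intro f j hj
  rw [VP]
  calc ∑ k ∈ Finset.Icc 1 n, f (xNode w n k) * Phi w n m k (xNode w n j)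
      = ∑ k ∈ Finset.Icc 1 n, (if j = k then f (xNode w n k) else 0) := by
        refine Finset.sum_congr rfl fun k hk => ?_
        rw [hdelta j hj k hk, mul_ite, mul_one, mul_zero]
    _ = f (xNode w n j) := by rw [Finset.sum_ite_eq]; simp [hj]
end
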